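/- arXiv:1204.5077 — 4 statements merged into one kernel-verified Lean document; each statement's English description precedes it below -/
import Mathlib

section
/- Let $U$ be a 2-dimensional complex vector space and $p, q \ge 1$ integers. For a linear hyperplane $\wp \subset S^p U$, the following are equivalent: (i) there is a 1-dimensional subspace $\ell \subset U$ with $\wp = \ell \cdot S^{p-1} U$; (ii) the restriction to $\wp \otimes S^q U$ of the multiplication map $\mu\colon S^p U \otimes S^q U \to S^{p+q} U$ is not surjective. -/
open MvPolynomial

set_option maxHeartbeats 1000000
set_option synthInstance.maxHeartbeats 200000

noncomputable section HPLaux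
namespace HPLaux

abbrev R2 := MvPolynomial (Fin 2) ℂ
abbrev H (d : ℕ) : Submodule ℂ R2 := homogeneousSubmodule (Fin 2) ℂ d

/-- standard exponent of the monomial `x^i y^(d-i)` -/
def mono (d i : ℕ) : Fin 2 →₀ ℕ := Finsupp.single 0 i + Finsupp.single 1 (d - i)

lemma mono_apply0 (d i : ℕ) : mono d i 0 = i := by simp [mono]
lemma mono_apply1 (d i : ℕ) : mono d i 1 = d - i := by simp [mono]

lemma fin2_eq (e : Fin 2 →₀ ℕ) : e = Finsupp.single 0 (e 0) + Finsupp.single 1 (e 1) := by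
  ext j
  fin_cases j <;> simp [Finsupp.single_apply]

lemma fin2_degree (e : Fin 2 →₀ ℕ) : e.degree = e 0 + e 1 := by
  rw [Finsupp.degree, ← Fin.sum_univ_two (f := fun i => e i)]
  exact Finset.sum_subset (Finset.subset_univ _) (by
    intro x _ hx
    simpa using (Finsupp.notMem_support_iff).mp hx)

lemma mono_degree {d i : ℕ} (h : i ≤ d) : (mono d i).degree = d := by
  rw [fin2_degree, mono_apply0, mono_apply1]; omega

lemma mono_inj {d : ℕ} {i j : ℕ} (h : mono d i = mono d j) : i = j := by
  have := congrArg (fun e => e 0) h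
  simpa [mono_apply0] using this

lemma exponent_eq {d : ℕ} {f : R2} (hf : f ∈ H d) {e : Fin 2 →₀ ℕ}
    (he : coeff e f ≠ 0) : e = mono d (e 0) ∧ e 0 ≤ d := by
  have hdeg : e.degree = d := by
    by_contra hne
    exact he (hf.coeff_eq_zero hne)
  rw [fin2_degree] at hdeg
  constructor
  · rw [mono, show d - e 0 = e 1 by omega]
    exact fin2_eq e
  · omega

lemma repr_of_mem {d : ℕ} {f : R2} (hf : f ∈ H d) :
    f = ∑ i : Fin (d + 1), monomial (mono d i) (coeff (mono d i) f) := by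
  apply MvPolynomial.ext
  intro e
  rw [coeff_sum]
  simp only [coeff_monomial]
  by_cases he : coeff e f = 0
  · rw [he, Finset.sum_eq_zero]
    intro i _
    split_ifs with h
    · rw [h, he]
    · rfl
  · obtain ⟨he1, he2⟩ := exponent_eq hf he
    rw [Finset.sum_eq_single (⟨e 0, by omega⟩ : Fin (d + 1))]
    · rw [if_pos he1.symm, ← he1]
    · intro j _ hj
      rw [if_neg]
      intro h
      exact hj (by
        apply Fin.ext
        simpa using mono_inj (d := d) (h.trans he1))
    · simp

/-- the linear map sending coordinates to a homogeneous polynomial of degree d -/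
def Ψ (d : ℕ) : (Fin (d + 1) → ℂ) →ₗ[ℂ] H d :=
  (∑ i : Fin (d + 1),
    (MvPolynomial.monomial (R := ℂ) (mono d i)).comp
      (LinearMap.proj i)).codRestrict (H d) (by
    intro c
    rw [LinearMap.sum_apply]
    apply Submodule.sum_mem
    intro i _
    exact isHomogeneous_monomial _ (mono_degree (by omega : (i : ℕ) ≤ d)))

lemma Ψ_coe (d : ℕ) (c : Fin (d + 1) → ℂ) :
    (Ψ d c : R2) = ∑ i : Fin (d + 1), monomial (mono d i) (c i) := by
  simp [Ψ, LinearMap.codRestrict, LinearMap.sum_apply]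

lemma Ψ_bijective (d : ℕ) : Function.Bijective (Ψ d) := by
  constructor
  · rw [injective_iff_map_eq_zero]
    intro c hc
    have h0 : (Ψ d c : R2) = 0 := by rw [hc]; rfl
    rw [Ψ_coe] at h0
    funext j
    have := congrArg (coeff (mono d j)) h0
    rw [coeff_sum, coeff_zero] at this
    simp only [coeff_monomial] at this
    rwa [Finset.sum_eq_single j (fun i _ hij => by
        rw [if_neg]
        exact fun h => hij (Fin.ext (mono_inj (d := d) h)))
      (by simp), if_pos rfl] at this
  · rintro ⟨f, hf⟩
    refine ⟨fun i => coeff (mono d i) f, ?_⟩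
    apply Subtype.ext
    rw [Ψ_coe]
    exact (repr_of_mem hf).symm

/-- the coordinate equivalence -/
def Hequiv (d : ℕ) : (Fin (d + 1) → ℂ) ≃ₗ[ℂ] H d :=
  LinearEquiv.ofBijective (Ψ d) (Ψ_bijective d)

instance H_findim (d : ℕ) : FiniteDimensional ℂ (H d) :=
  Module.Finite.equiv (Hequiv d)

lemma H_finrank (d : ℕ) : Module.finrank ℂ (H d) = d + 1 := by
  rw [← (Hequiv d).finrank_eq, Module.finrank_pi, Fintype.card_fin]

lemma mono_split {a b i : ℕ} (h : i ≤ a + b) :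
    mono (a + b) i = mono a (min i a) + mono b (i - min i a) := by
  unfold mono
  rw [add_add_add_comm, ← Finsupp.single_add, ← Finsupp.single_add]
  congr 1 <;> [skip; skip] <;> congr 1 <;> omega

lemma H_mul_H (a b : ℕ) : H a * H b = H (a + b) := by
  refine le_antisymm (homogeneousSubmodule_mul a b) ?_
  intro f hf
  rw [repr_of_mem hf]
  apply Submodule.sum_mem
  intro i _
  have hi : (i : ℕ) ≤ a + b := by omega
  set j : ℕ := min (i : ℕ) a with hj
  have : (monomial (mono (a + b) i) (coeff (mono (a + b) i) f) : R2)
      = monomial (mono a j) 1 * monomial (mono b ((i : ℕ) - j)) (coeff (mono (a + b) i) f) := by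
    rw [monomial_mul, one_mul, ← mono_split hi]
  rw [this]
  exact Submodule.mul_mem_mul
    (isHomogeneous_monomial _ (mono_degree (by omega)))
    (isHomogeneous_monomial _ (mono_degree (by omega)))

lemma finSuccEquiv_C' (c : ℂ) :
    (finSuccEquiv ℂ 1) (C c) = Polynomial.C (C c) := by
  have h := RingHom.congr_fun (finSuccEquiv_comp_C_eq_C (R := ℂ) 1) c
  simp only [RingHom.coe_comp, RingHom.coe_coe, Function.comp_apply] at h
  rw [← h, AlgEquiv.apply_symm_apply]

lemma prime_lin' (a b : ℂ) (hb : b ≠ 0) :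
    Prime (b • X 0 - a • X 1 : R2) := by
  rw [← MulEquiv.prime_iff (finSuccEquiv ℂ 1).toRingEquiv.toMulEquiv]
  have h1 : ((finSuccEquiv ℂ 1).toRingEquiv.toMulEquiv) ((b • X 0 - a • X 1 : R2)) =
      Polynomial.C (C b) * (Polynomial.X - Polynomial.C (C (a / b) * X 0)) := by
    show (finSuccEquiv ℂ 1) ((b • X 0 - a • X 1 : R2)) = _
    rw [smul_eq_C_mul, smul_eq_C_mul, map_sub, map_mul, map_mul, finSuccEquiv_X_zero,
      show (1 : Fin 2) = Fin.succ 0 from rfl, finSuccEquiv_X_succ,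
      finSuccEquiv_C', finSuccEquiv_C', mul_sub]
    refine congrArg (HSub.hSub _) ?_
    rw [← Polynomial.C_mul, ← Polynomial.C_mul, ← mul_assoc, ← C_mul,
      mul_div_cancel₀ a hb]
  rw [h1]
  have hu : IsUnit (Polynomial.C (C b : MvPolynomial (Fin 1) ℂ)) :=
    ((isUnit_iff_ne_zero.mpr hb).map (C : ℂ →+* MvPolynomial (Fin 1) ℂ)).map
      (Polynomial.C : _ →+* Polynomial (MvPolynomial (Fin 1) ℂ))
  exact (associated_unit_mul_right _ _ hu).prime (Polynomial.prime_X_sub_C _)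

lemma prime_lin (a b : ℂ) (h : ¬(a = 0 ∧ b = 0)) :
    Prime (b • X 0 - a • X 1 : R2) := by
  by_cases hb : b = 0
  · have ha : a ≠ 0 := fun h' => h ⟨h', hb⟩
    subst hb
    rw [← MulEquiv.prime_iff (renameEquiv ℂ (Equiv.swap (0 : Fin 2) 1)).toRingEquiv.toMulEquiv]
    have h2 : ((renameEquiv ℂ (Equiv.swap (0 : Fin 2) 1)).toRingEquiv.toMulEquiv)
        ((0 : ℂ) • X 0 - a • X 1 : R2) = -((a • X 0 - (0:ℂ) • X 1 : R2)) := by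
      show (renameEquiv ℂ (Equiv.swap (0 : Fin 2) 1)) _ = _
      rw [map_sub, map_smul, map_smul, renameEquiv_apply, renameEquiv_apply,
        rename_X, rename_X, Equiv.swap_apply_left, Equiv.swap_apply_right]
      simp [neg_sub]
    rw [h2]
    exact (prime_lin' 0 a ha).neg
  · exact prime_lin' a b hb

lemma span_mul_eq_map (a : R2) (N : Submodule ℂ R2) :
    Submodule.span ℂ {a} * N = Submodule.map (LinearMap.mulLeft ℂ a) N := by
  apply le_antisymm
  · rw [Submodule.mul_le]
    intro x hx y hy
    obtain ⟨c, rfl⟩ := Submodule.mem_span_singleton.mp hx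
    exact ⟨c • y, N.smul_mem c hy, by
      simp [LinearMap.mulLeft_apply, smul_mul_assoc, mul_smul_comm]⟩
  · rintro _ ⟨y, hy, rfl⟩
    exact Submodule.mul_mem_mul (Submodule.mem_span_singleton_self a) hy

lemma finrank_span_mul {a : R2} (ha : a ≠ 0) (N : Submodule ℂ R2) :
    Module.finrank ℂ (Submodule.span ℂ {a} * N) = Module.finrank ℂ N := by
  rw [span_mul_eq_map]
  exact (LinearEquiv.finrank_eq
    (Submodule.equivMapOfInjective _ (mul_right_injective₀ ha) N)).symm

/-- quotient of a homogeneous polynomial by a linear form is homogeneous -/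
lemma div_homog {ℓ g f : R2} (hℓ : ℓ ∈ H 1) {n : ℕ} (hf : f ∈ H (n + 1))
    (hfg : f = ℓ * g) : ∃ g', g' ∈ H n ∧ f = ℓ * g' := by
  classical
  have hrepr : f = ∑ i ∈ Finset.range (g.totalDegree + 1),
      homogeneousComponent (n + 1) (ℓ * homogeneousComponent i g) := by
    have hf1 : homogeneousComponent (n + 1) f = f := by
      rw [homogeneousComponent_of_mem hf, if_pos rfl]
    conv_lhs => rw [← hf1, hfg]
    conv_lhs => rw [← sum_homogeneousComponent g]
    rw [Finset.mul_sum, map_sum]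
  have hterm : ∀ i ∈ Finset.range (g.totalDegree + 1),
      homogeneousComponent (n + 1) (ℓ * homogeneousComponent i g)
        = if i = n then ℓ * homogeneousComponent n g else 0 := by
    intro i _
    have hmem : ℓ * homogeneousComponent i g ∈ H (1 + i) :=
      Submodule.mul_mem_mul hℓ (homogeneousComponent_mem i g) |> homogeneousSubmodule_mul 1 i
    rw [homogeneousComponent_of_mem hmem]
    by_cases h : i = n
    · subst h; rw [if_pos rfl, if_pos (by omega)]
    · rw [if_neg (by omega), if_neg h]
  rw [Finset.sum_congr rfl hterm, Finset.sum_ite_eq' _ n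
    (fun _ => ℓ * homogeneousComponent n g)] at hrepr
  by_cases hn : n ∈ Finset.range (g.totalDegree + 1)
  · rw [if_pos hn] at hrepr
    exact ⟨homogeneousComponent n g, homogeneousComponent_mem n g, hrepr⟩
  · rw [if_neg hn] at hrepr
    exact ⟨0, (H n).zero_mem, by rw [mul_zero]; exact hrepr⟩

/-- Key step: a functional vanishing on `℘ * H 1` kills `ℓ' * H p` for some line ℓ'. -/
lemma exists_line (p : ℕ) (℘ : Submodule ℂ R2) (h℘ : ℘ ≤ H p)
    (hdim : Module.finrank ℂ ℘ = p) (μ : Module.Dual ℂ R2)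
    (hμ : ∀ w ∈ ℘ * H 1, μ w = 0) :
    ∃ a b : ℂ, ¬(a = 0 ∧ b = 0) ∧
      ∀ f ∈ H p, μ ((b • X 0 - a • X 1) * f) = 0 := by
  classical
  set μx : H p →ₗ[ℂ] ℂ := μ.comp ((LinearMap.mulLeft ℂ (X 0)).comp (H p).subtype) with hμx
  set μy : H p →ₗ[ℂ] ℂ := μ.comp ((LinearMap.mulLeft ℂ (X 1)).comp (H p).subtype) with hμy
  set ℘' : Submodule ℂ (H p) := ℘.comap (H p).subtype with h℘'
  have h℘'rank : Module.finrank ℂ ℘' = p :=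
    (LinearEquiv.finrank_eq (Submodule.comapSubtypeEquivOfLe h℘)).trans hdim
  have hμx_apply : ∀ g : H p, μx g = μ (X 0 * (g : R2)) := fun g => rfl
  have hμy_apply : ∀ g : H p, μy g = μ (X 1 * (g : R2)) := fun g => rfl
  have hker : ∀ i : Fin 2, ∀ g : H p, (g : R2) ∈ ℘ → μ (X i * (g : R2)) = 0 := by
    intro i g hg
    apply hμ
    rw [mul_comm (X i) (g : R2)]
    exact Submodule.mul_mem_mul hg (isHomogeneous_X ℂ i)
  by_cases hx0 : μx = 0
  · refine ⟨0, 1, by simp, ?_⟩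
    intro f hf
    have := congrFun (congrArg DFunLike.coe hx0) ⟨f, hf⟩
    rw [hμx_apply ⟨f, hf⟩] at this
    simpa using this
  · -- μx ≠ 0 : ℘' = ker μx, and μy is proportional to μx
    obtain ⟨f₀, hf₀⟩ : ∃ f₀ : H p, μx f₀ ≠ 0 := by
      by_contra h
      push_neg at h
      exact hx0 (LinearMap.ext fun g => h g)
    have h℘ker : ℘' ≤ LinearMap.ker μx := by
      intro g hg
      rw [LinearMap.mem_ker, hμx_apply g]
      exact hker 0 g hg
    have hkerrank : Module.finrank ℂ (LinearMap.ker μx) = p := by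
      have h1 := LinearMap.finrank_range_add_finrank_ker μx
      have hr : Module.finrank ℂ (LinearMap.range μx) = 1 := by
        apply le_antisymm
        · simpa using Submodule.finrank_le (LinearMap.range μx)
        · have : LinearMap.range μx ≠ ⊥ := by
            intro h
            exact hf₀ (by
              have := LinearMap.mem_range_self μx f₀
              rw [h] at this
              simpa using this)
          have h2 : 0 < Module.finrank ℂ (LinearMap.range μx) :=
            Module.finrank_pos_iff.mpr (Submodule.nontrivial_iff_ne_bot.mpr this)
          omega
      rw [hr, H_finrank p] at h1
      omega
    have h℘eq : ℘' = LinearMap.ker μx :=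
      Submodule.eq_of_le_of_finrank_le h℘ker (by rw [hkerrank, h℘'rank])
    refine ⟨μx f₀, μy f₀, fun h => hf₀ h.1, ?_⟩
    intro f hf
    have hrel : ∀ g : H p, μy f₀ * μx g = μx f₀ * μy g := by
      intro g
      set c : ℂ := μx g / μx f₀ with hc
      have hmem : g - c • f₀ ∈ LinearMap.ker μx := by
        rw [LinearMap.mem_ker, map_sub, map_smul, smul_eq_mul, hc,
          div_mul_cancel₀ _ hf₀, sub_self]
      rw [← h℘eq] at hmem
      have hy0 : μy (g - c • f₀) = 0 := by
        rw [hμy_apply]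
        exact hker 1 _ hmem
      rw [map_sub, map_smul, smul_eq_mul, sub_eq_zero] at hy0
      rw [hy0, hc]
      field_simp
    have : μ ((μy f₀ • X 0 - μx f₀ • X 1) * f) =
        μy f₀ * μx ⟨f, hf⟩ - μx f₀ * μy ⟨f, hf⟩ := by
      rw [sub_mul, smul_mul_assoc, smul_mul_assoc, map_sub, map_smul, map_smul,
        smul_eq_mul, smul_eq_mul, hμx_apply ⟨f, hf⟩, hμy_apply ⟨f, hf⟩]
    rw [this, hrel ⟨f, hf⟩, sub_self]

lemma H1_repr {ℓ : R2} (hℓ : ℓ ∈ H 1) :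
    ℓ = coeff (Finsupp.single 0 1) ℓ • X 0 + coeff (Finsupp.single 1 1) ℓ • X 1 := by
  have h := repr_of_mem hℓ
  rw [Fin.sum_univ_two] at h
  have h0 : mono 1 ((0 : Fin 2) : ℕ) = Finsupp.single 1 1 := by
    unfold mono
    ext j
    fin_cases j <;> simp [Finsupp.single_apply]
  have h1 : mono 1 ((1 : Fin 2) : ℕ) = Finsupp.single 0 1 := by
    unfold mono
    ext j
    fin_cases j <;> simp [Finsupp.single_apply]
  rw [h0, h1] at h
  have hmon : ∀ (i : Fin 2) (c : ℂ), monomial (Finsupp.single i 1) c = c • X i := by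
    intro i c
    rw [X, ← map_smul (monomial (Finsupp.single i 1)), smul_eq_mul, mul_one]
  rw [hmon, hmon] at h
  exact h.trans (add_comm _ _)

lemma dirA (p q : ℕ) (hp : 1 ≤ p) (hq : 1 ≤ q)
    {ℓ : R2} (hℓH : ℓ ∈ H 1) (hℓ0 : ℓ ≠ 0) :
    Submodule.span ℂ {ℓ} * H (p - 1) * H q ≠ H (p + q) := by
  intro hcon
  set a := coeff (Finsupp.single 0 1) ℓ with ha_def
  set b := coeff (Finsupp.single 1 1) ℓ with hb_def
  have hrep := H1_repr hℓH
  have hab : ¬(a = 0 ∧ b = 0) := by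
    rintro ⟨ha, hb⟩
    rw [← ha_def, ← hb_def, ha, hb, zero_smul, zero_smul, add_zero] at hrep
    exact hℓ0 hrep
  set v : Fin 2 → ℂ := ![b, -a] with hv
  have hEvℓ : aeval v ℓ = 0 := by
    conv_lhs => rw [hrep]
    rw [map_add, map_smul, map_smul, aeval_X, aeval_X]
    show a • v 0 + b • v 1 = 0
    rw [hv]
    simp only [Matrix.cons_val_zero, Matrix.cons_val_one, Matrix.head_cons, smul_eq_mul]
    ring
  have hprod : Submodule.span ℂ {ℓ} * H (p - 1) * H q ≤
      LinearMap.ker (aeval v : R2 →ₐ[ℂ] ℂ).toLinearMap := by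
    rw [mul_assoc, H_mul_H]
    rw [Submodule.mul_le]
    intro x hx y hy
    obtain ⟨c, rfl⟩ := Submodule.mem_span_singleton.mp hx
    rw [LinearMap.mem_ker]
    show aeval v (c • ℓ * y) = 0
    rw [smul_mul_assoc, map_smul, map_mul, hEvℓ, zero_mul, smul_zero]
  rw [hcon] at hprod
  have hX0 : aeval v ((X 0 : R2) ^ (p + q)) = 0 := by
    have := hprod (isHomogeneous_X_pow (R := ℂ) (0 : Fin 2) (p + q))
    rwa [LinearMap.mem_ker] at this
  have hX1 : aeval v ((X 1 : R2) ^ (p + q)) = 0 := by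
    have := hprod (isHomogeneous_X_pow (R := ℂ) (1 : Fin 2) (p + q))
    rwa [LinearMap.mem_ker] at this
  rw [map_pow, aeval_X] at hX0 hX1
  have hb0 : v 0 = 0 := pow_eq_zero_iff (by omega) |>.mp hX0
  have ha0 : v 1 = 0 := pow_eq_zero_iff (by omega) |>.mp hX1
  rw [hv] at hb0 ha0
  simp only [Matrix.cons_val_zero, Matrix.cons_val_one, Matrix.head_cons, neg_eq_zero] at hb0 ha0
  exact hab ⟨ha0, hb0⟩

lemma dirB (p q : ℕ) (hp : 1 ≤ p) (hq : 1 ≤ q)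
    (℘ : Submodule ℂ R2) (h℘ : ℘ ≤ H p) (hdim : Module.finrank ℂ ℘ = p)
    (hne : ℘ * H q ≠ H (p + q)) :
    ∃ ℓ : R2, ℓ ∈ H 1 ∧ ℓ ≠ 0 ∧ ℘ = Submodule.span ℂ {ℓ} * H (p - 1) := by
  classical
  -- reduce to q = 1
  have hne1 : ℘ * H 1 ≠ H (p + 1) := by
    intro heq
    apply hne
    have e1 : H 1 * H (q - 1) = H q := by
      rw [H_mul_H]; congr 1; omega
    have e2 : H (p + 1) * H (q - 1) = H (p + q) := by
      rw [H_mul_H]; congr 1; omega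
    calc ℘ * H q = ℘ * (H 1 * H (q - 1)) := by rw [e1]
      _ = (℘ * H 1) * H (q - 1) := (mul_assoc _ _ _).symm
      _ = H (p + 1) * H (q - 1) := by rw [heq]
      _ = H (p + q) := e2
  have hle1 : ℘ * H 1 ≤ H (p + 1) :=
    le_trans (mul_le_mul' h℘ (le_refl (H 1))) (homogeneousSubmodule_mul p 1)
  obtain ⟨x, hxH, hxn⟩ := SetLike.exists_of_lt (lt_of_le_of_ne hle1 hne1)
  obtain ⟨μ, hμx, hμbot⟩ :=
    Submodule.exists_dual_map_eq_bot_of_notMem (p := ℘ * H 1) hxn inferInstance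
  have hμ0 : ∀ w ∈ ℘ * H 1, μ w = 0 := by
    intro w hw
    have : μ w ∈ (℘ * H 1).map μ := Submodule.mem_map_of_mem hw
    rw [hμbot] at this
    simpa using this
  obtain ⟨a, b, hab, hline⟩ := exists_line p ℘ h℘ hdim μ hμ0
  set ℓ' : R2 := b • X 0 - a • X 1 with hℓ'
  have hℓ'H : ℓ' ∈ H 1 :=
    sub_mem ((H 1).smul_mem b (isHomogeneous_X ℂ 0)) ((H 1).smul_mem a (isHomogeneous_X ℂ 1))
  have hℓ'0 : ℓ' ≠ 0 := (prime_lin a b hab).ne_zero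
  have hH1p : H 1 * H p = H (p + 1) := by rw [H_mul_H]; congr 1; omega
  set B : Submodule ℂ R2 := LinearMap.ker μ ⊓ H (p + 1) with hB
  have hKB : Submodule.span ℂ {ℓ'} * H p ≤ B := by
    rw [Submodule.mul_le]
    intro z hz y hy
    obtain ⟨c, rfl⟩ := Submodule.mem_span_singleton.mp hz
    rw [hB, Submodule.mem_inf]
    constructor
    · rw [LinearMap.mem_ker, smul_mul_assoc, map_smul, hline y hy, smul_zero]
    · rw [smul_mul_assoc]
      exact (H (p + 1)).smul_mem c (hH1p ▸ Submodule.mul_mem_mul hℓ'H hy)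
  have hBfd : FiniteDimensional ℂ B :=
    Submodule.finiteDimensional_of_le (inf_le_right : B ≤ H (p + 1))
  have hBlt : B < H (p + 1) := by
    refine lt_of_le_of_ne inf_le_right ?_
    intro h
    have : x ∈ B := h.symm ▸ hxH
    exact hμx this.1
  have hBrank : Module.finrank ℂ B ≤ p + 1 := by
    have := Submodule.finrank_lt_finrank_of_lt hBlt
    rw [H_finrank] at this
    omega
  have hKrank : Module.finrank ℂ (Submodule.span ℂ {ℓ'} * H p) = p + 1 := by
    rw [finrank_span_mul hℓ'0, H_finrank]
  have hKeq : Submodule.span ℂ {ℓ'} * H p = B :=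
    Submodule.eq_of_le_of_finrank_le hKB (by rw [hKrank]; exact hBrank)
  have h℘K : ℘ * H 1 ≤ Submodule.span ℂ {ℓ'} * H p := by
    rw [hKeq]
    exact le_inf (fun w hw => hμ0 w hw) hle1
  -- every element of ℘ is divisible by ℓ'
  have hdvd : ∀ f ∈ ℘, ℓ' ∣ f := by
    intro f hf
    have hdvd0 : ℓ' ∣ f * X 0 := by
      have h0 : f * X 0 ∈ Submodule.span ℂ {ℓ'} * H p :=
        h℘K (Submodule.mul_mem_mul hf (isHomogeneous_X ℂ 0))
      rw [span_mul_eq_map] at h0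
      obtain ⟨g, _, hg⟩ := h0
      exact ⟨g, hg.symm⟩
    have hdvd1 : ℓ' ∣ f * X 1 := by
      have h1 : f * X 1 ∈ Submodule.span ℂ {ℓ'} * H p :=
        h℘K (Submodule.mul_mem_mul hf (isHomogeneous_X ℂ 1))
      rw [span_mul_eq_map] at h1
      obtain ⟨g, _, hg⟩ := h1
      exact ⟨g, hg.symm⟩
    have hprime := prime_lin a b hab
    rcases hprime.2.2 f (X 0) hdvd0 with h | h
    · exact h
    · rcases hprime.2.2 f (X 1) hdvd1 with h' | h'
      · exact h'
      · -- ℓ' divides both variables: contradiction via evaluation at (a, b)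
        exfalso
        set v : Fin 2 → ℂ := ![a, b] with hv
        have hEvℓ : aeval v ℓ' = 0 := by
          rw [hℓ', map_sub, map_smul, map_smul, aeval_X, aeval_X]
          show b • v 0 - a • v 1 = 0
          rw [hv]
          simp only [Matrix.cons_val_zero, Matrix.cons_val_one, Matrix.head_cons, smul_eq_mul]
          ring
        obtain ⟨t, ht⟩ := h
        obtain ⟨t', ht'⟩ := h'
        have h0 : aeval v (X 0 : R2) = 0 := by rw [ht, map_mul, hEvℓ, zero_mul]
        have h1 : aeval v (X 1 : R2) = 0 := by rw [ht', map_mul, hEvℓ, zero_mul]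
        rw [aeval_X] at h0 h1
        rw [hv] at h0 h1
        simp only [Matrix.cons_val_zero, Matrix.cons_val_one, Matrix.head_cons] at h0 h1
        exact hab ⟨h0, h1⟩
  -- hence ℘ ≤ ℓ' ⬝ H (p-1), and equality by dimension count
  have h℘le : ℘ ≤ Submodule.span ℂ {ℓ'} * H (p - 1) := by
    intro f hf
    obtain ⟨g, hg⟩ := hdvd f hf
    have hfH : f ∈ H ((p - 1) + 1) := by
      rw [show p - 1 + 1 = p by omega]
      exact h℘ hf
    obtain ⟨g', hg'H, hfg'⟩ := div_homog hℓ'H hfH hg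
    rw [hfg']
    exact Submodule.mul_mem_mul (Submodule.mem_span_singleton_self ℓ') hg'H
  have hSfd : FiniteDimensional ℂ (Submodule.span ℂ {ℓ'} * H (p - 1)) := by
    rw [span_mul_eq_map]
    exact Module.Finite.equiv (Submodule.equivMapOfInjective _ (mul_right_injective₀ hℓ'0) _)
  have h℘eq : ℘ = Submodule.span ℂ {ℓ'} * H (p - 1) := by
    refine (Submodule.eq_of_le_of_finrank_le h℘le ?_)
    rw [finrank_span_mul hℓ'0, H_finrank, hdim]
    omega
  exact ⟨ℓ', hℓ'H, hℓ'0, h℘eq⟩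

end HPLaux
end HPLaux

open HPLaux in
/-- For a hyperplane `℘ ⊂ SᵖU` (with `U = ℂ²`, symmetric powers modelled by
homogeneous polynomials in two variables), the following are equivalent: `℘ = ℓ · S^{p-1}U`
for some line `ℓ ⊂ U`, iff the multiplication map `℘ ⊗ S^qU → S^{p+q}U` is not surjective. -/
theorem hyperplane_product_line_iff_mul_not_surjective (p q : ℕ) (hp : 1 ≤ p) (hq : 1 ≤ q)
    (℘ : Submodule ℂ (MvPolynomial (Fin 2) ℂ))
    (h℘ : ℘ ≤ homogeneousSubmodule (Fin 2) ℂ p)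
    (hdim : Module.finrank ℂ ℘ = p) :
    (∃ ℓ : MvPolynomial (Fin 2) ℂ, ℓ ∈ homogeneousSubmodule (Fin 2) ℂ 1 ∧ ℓ ≠ 0 ∧
        ℘ = Submodule.span ℂ {ℓ} * homogeneousSubmodule (Fin 2) ℂ (p - 1)) ↔
      ℘ * homogeneousSubmodule (Fin 2) ℂ q ≠ homogeneousSubmodule (Fin 2) ℂ (p + q) := by
  constructor
  · rintro ⟨ℓ, hℓH, hℓ0, rfl⟩
    exact dirA p q hp hq hℓH hℓ0
  · exact dirB p q hp hq ℘ h℘ hdim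
end

section
/- Let $U = \mathbb{C}^2$ and $p, q \ge 1$. Suppose linear automorphisms $\alpha \in GL(S^p U)$, $\beta \in GL(S^q U)$, $\gamma \in GL(S^{p+q} U)$ satisfy $\mu \circ (\alpha \otimes \beta) = \gamma \circ \mu$, where $\mu\colon S^p U \otimes S^q U \to S^{p+q}U$ is the multiplication map. Then there exists $g \in GL(U)$, unique up to a nonzero scalar, such that $S^p g \in \mathbb{C}^*\cdot\alpha$, $S^q g \in \mathbb{C}^*\cdot\beta$, and $S^{p+q} g \in \mathbb{C}^*\cdot\gamma$. -/
open MvPolynomial Matrix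

/-- The algebra endomorphism of `ℂ[X₀, X₁]` induced by a `2 × 2` matrix `g`
(the action of `g ∈ GL(U)` on the symmetric algebra of `U = ℂ²`). -/
noncomputable def substMap (g : Matrix (Fin 2) (Fin 2) ℂ) :
    MvPolynomial (Fin 2) ℂ →ₐ[ℂ] MvPolynomial (Fin 2) ℂ :=
  MvPolynomial.aeval fun i => ∑ j, MvPolynomial.C (g i j) * MvPolynomial.X j

/-- `g` induces (up to a nonzero scalar) the automorphism `α` of the `m`-th symmetric
power `SᵐU`, modelled as the degree-`m` homogeneous component of `ℂ[X₀, X₁]`. -/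
def InducesUpToScalar (g : Matrix (Fin 2) (Fin 2) ℂ) (m : ℕ)
    (α : (homogeneousSubmodule (Fin 2) ℂ m) ≃ₗ[ℂ] (homogeneousSubmodule (Fin 2) ℂ m)) :
    Prop :=
  ∃ c : ℂˣ, ∀ x : homogeneousSubmodule (Fin 2) ℂ m,
    substMap g (x : MvPolynomial (Fin 2) ℂ) = (c : ℂ) • ((α x : MvPolynomial (Fin 2) ℂ))

namespace SymPowAux


/-- Substitution `Xᵢ ↦ Xᵢ·T` used to detect homogeneity. -/
noncomputable def Phi : MvPolynomial (Fin 2) ℂ →ₐ[ℂ] Polynomial (MvPolynomial (Fin 2) ℂ) :=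
  aeval fun i => Polynomial.C (X i) * Polynomial.X

lemma Phi_coeff_homog (f : MvPolynomial (Fin 2) ℂ) (k : ℕ) :
    ((Phi f).coeff k).IsHomogeneous k := by
  induction f using MvPolynomial.induction_on generalizing k with
  | C a =>
      have : Phi (C a) = Polynomial.C (C a) := by
        simp [Phi, algebraMap_eq, Polynomial.algebraMap_apply]
      rw [this, Polynomial.coeff_C]
      split
      · subst ‹k = 0›; exact isHomogeneous_C _ _
      · exact isHomogeneous_zero _ _ _
  | add f g hf hg =>
      rw [map_add, Polynomial.coeff_add]
      exact (hf k).add (hg k)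
  | mul_X f i hf =>
      have : Phi (f * X i) = (Phi f * Polynomial.C (X i)) * Polynomial.X := by
        rw [_root_.map_mul]; simp [Phi, mul_assoc]
      rw [this]
      cases k with
      | zero => rw [Polynomial.coeff_mul_X_zero]; exact isHomogeneous_zero _ _ _
      | succ k =>
          rw [Polynomial.coeff_mul_X, Polynomial.coeff_mul_C]
          exact (hf k).mul (isHomogeneous_X _ _)

lemma eval_one_Phi (f : MvPolynomial (Fin 2) ℂ) : Polynomial.eval 1 (Phi f) = f := by
  induction f using MvPolynomial.induction_on with
  | C a => simp [Phi, algebraMap_eq, Polynomial.algebraMap_apply]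
  | add f g hf hg => rw [map_add, Polynomial.eval_add, hf, hg]
  | mul_X f i hf => rw [_root_.map_mul, Polynomial.eval_mul, hf]; simp [Phi]

lemma Phi_ne_zero {f : MvPolynomial (Fin 2) ℂ} (h : f ≠ 0) : Phi f ≠ 0 := by
  intro hh
  apply h
  rw [← eval_one_Phi f, hh, Polynomial.eval_zero]





lemma eval_one_eq_sum (P : Polynomial (MvPolynomial (Fin 2) ℂ)) :
    Polynomial.eval 1 P = ∑ k ∈ Finset.range (P.natDegree + 1), P.coeff k := by
  rw [Polynomial.eval_eq_sum_range]
  simp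

lemma Phi_of_isHomogeneous {f : MvPolynomial (Fin 2) ℂ} {n : ℕ} (hf : f.IsHomogeneous n) :
    Phi f = Polynomial.C f * Polynomial.X ^ n := by
  by_cases h0 : f = 0
  · simp [h0]
  set N := (Phi f).natDegree with hN
  have E : f = ∑ k ∈ Finset.range (N + 1), (Phi f).coeff k := by
    conv_lhs => rw [← eval_one_Phi f]
    exact eval_one_eq_sum _
  have hz : ∀ k, k ≠ n → (Phi f).coeff k = 0 := by
    intro k hk
    by_cases hkN : N < k
    · exact Polynomial.coeff_eq_zero_of_natDegree_lt hkN
    push_neg at hkN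
    ext d
    rw [coeff_zero]
    by_cases hd : d.degree = k
    · have h1 : coeff d f = 0 := hf.coeff_eq_zero (by rw [hd]; exact hk)
      have h2 : coeff d f = ∑ j ∈ Finset.range (N + 1), coeff d ((Phi f).coeff j) := by
        conv_lhs => rw [E]
        rw [MvPolynomial.coeff_sum]
      have h3 : ∑ j ∈ Finset.range (N + 1), coeff d ((Phi f).coeff j)
          = coeff d ((Phi f).coeff k) := by
        refine Finset.sum_eq_single_of_mem k (Finset.mem_range.2 (by omega)) ?_
        intro j _ hj
        exact (Phi_coeff_homog f j).coeff_eq_zero (by rw [hd]; exact fun h => hj h.symm)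
      rw [← h3, ← h2, h1]
    · exact (Phi_coeff_homog f k).coeff_eq_zero hd
  have hn : (Phi f).coeff n = f := by
    by_cases hnN : n ≤ N
    · have hs : ∑ k ∈ Finset.range (N + 1), (Phi f).coeff k = (Phi f).coeff n :=
        Finset.sum_eq_single_of_mem n (Finset.mem_range.2 (Nat.lt_succ_of_le hnN))
          (fun j _ hj => hz j hj)
      rw [← hs]; exact E.symm
    · exfalso
      apply h0
      rw [E]
      refine Finset.sum_eq_zero fun j hj => hz j ?_
      rw [Finset.mem_range] at hj
      omega
  ext k
  rw [Polynomial.coeff_C_mul, Polynomial.coeff_X_pow]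
  by_cases hk : k = n
  · subst hk; simp [hn]
  · rw [hz k hk, if_neg hk, mul_zero]

lemma coeff_natDegree_of_trailing {P : Polynomial (MvPolynomial (Fin 2) ℂ)}
    (h : P.natTrailingDegree = P.natDegree) :
    Polynomial.eval 1 P = P.coeff P.natDegree := by
  rw [eval_one_eq_sum]
  refine Finset.sum_eq_single_of_mem _ (Finset.mem_range.2 (by omega)) ?_
  intro j hj hjne
  rw [Finset.mem_range] at hj
  exact Polynomial.coeff_eq_zero_of_lt_natTrailingDegree (by omega)

/-- Divisors of nonzero homogeneous polynomials are homogeneous. -/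
lemma isHomogeneous_of_mul {f g : MvPolynomial (Fin 2) ℂ} {n : ℕ}
    (h : (f * g).IsHomogeneous n) (h0 : f * g ≠ 0) :
    ∃ a b, a + b = n ∧ f.IsHomogeneous a ∧ g.IsHomogeneous b := by
  have hf0 : f ≠ 0 := left_ne_zero_of_mul h0
  have hg0 : g ≠ 0 := right_ne_zero_of_mul h0
  have hPf := Phi_ne_zero hf0
  have hPg := Phi_ne_zero hg0
  have key : Phi f * Phi g = Polynomial.C (f * g) * Polynomial.X ^ n := by
    rw [← _root_.map_mul]; exact Phi_of_isHomogeneous h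
  have hmono : (Polynomial.C (f * g) * Polynomial.X ^ n : Polynomial (MvPolynomial (Fin 2) ℂ))
      = Polynomial.monomial n (f * g) := Polynomial.C_mul_X_pow_eq_monomial
  have hd : (Phi f).natDegree + (Phi g).natDegree = n := by
    have h1 := Polynomial.natDegree_mul hPf hPg
    rw [key, hmono, Polynomial.natDegree_monomial, if_neg h0] at h1
    omega
  have ht : (Phi f).natTrailingDegree + (Phi g).natTrailingDegree = n := by
    have h1 := Polynomial.natTrailingDegree_mul hPf hPg
    rw [key, hmono, Polynomial.natTrailingDegree_monomial h0] at h1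
    omega
  have lef := Polynomial.natTrailingDegree_le_natDegree (p := Phi f)
  have leg := Polynomial.natTrailingDegree_le_natDegree (p := Phi g)
  have ef : (Phi f).natTrailingDegree = (Phi f).natDegree := by omega
  have eg : (Phi g).natTrailingDegree = (Phi g).natDegree := by omega
  refine ⟨(Phi f).natDegree, (Phi g).natDegree, hd, ?_, ?_⟩
  · have h1 := coeff_natDegree_of_trailing ef
    rw [eval_one_Phi] at h1
    have h2 := Phi_coeff_homog f (Phi f).natDegree
    rwa [← h1] at h2
  · have h1 := coeff_natDegree_of_trailing eg
    rw [eval_one_Phi] at h1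
    have h2 := Phi_coeff_homog g (Phi g).natDegree
    rwa [← h1] at h2



lemma degree_two (d : Fin 2 →₀ ℕ) : d.degree = d 0 + d 1 := by
  rw [Finsupp.degree_apply]
  rw [Finset.sum_subset (Finset.subset_univ d.support)
    (fun i _ hi => Finsupp.notMem_support_iff.1 hi)]
  exact Fin.sum_univ_two d

lemma mono_eq (i j : ℕ) :
    (X 0 ^ i * X 1 ^ j : MvPolynomial (Fin 2) ℂ)
      = monomial (Finsupp.single 0 i + Finsupp.single 1 j) 1 := by
  rw [X_pow_eq_monomial, X_pow_eq_monomial, monomial_mul, one_mul]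

lemma mono_mem {n i : ℕ} (h : i ≤ n) :
    (X 0 ^ i * X 1 ^ (n - i) : MvPolynomial (Fin 2) ℂ)
      ∈ homogeneousSubmodule (Fin 2) ℂ n := by
  rw [mem_homogeneousSubmodule]
  have := ((isHomogeneous_X ℂ (0 : Fin 2)).pow i).mul ((isHomogeneous_X ℂ (1 : Fin 2)).pow (n - i))
  convert this using 1
  omega

lemma homog_rep {n : ℕ} {f : MvPolynomial (Fin 2) ℂ} (hf : f.IsHomogeneous n) :
    f = ∑ i ∈ Finset.range (n + 1),
      coeff (Finsupp.single 0 i + Finsupp.single 1 (n - i)) f • (X 0 ^ i * X 1 ^ (n - i)) := by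
  ext d
  rw [MvPolynomial.coeff_sum]
  have hcoeff : ∀ i : ℕ, coeff d
      (coeff (Finsupp.single 0 i + Finsupp.single 1 (n - i)) f • (X 0 ^ i * X 1 ^ (n - i)))
      = coeff (Finsupp.single 0 i + Finsupp.single 1 (n - i)) f
        * (if Finsupp.single (0 : Fin 2) i + Finsupp.single 1 (n - i) = d then 1 else 0) := by
    intro i
    rw [smul_eq_C_mul, mono_eq, coeff_C_mul, coeff_monomial]
  by_cases hd : d 0 + d 1 = n
  · have hd0 : d 0 ≤ n := by omega
    have hdeq : Finsupp.single (0 : Fin 2) (d 0) + Finsupp.single 1 (n - d 0) = d := by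
      ext x
      fin_cases x <;> simp [Finsupp.single_apply] <;> omega
    have hs : ∑ i ∈ Finset.range (n + 1), coeff d
        (coeff (Finsupp.single 0 i + Finsupp.single 1 (n - i)) f • (X 0 ^ i * X 1 ^ (n - i)))
        = coeff d
          (coeff (Finsupp.single (0 : Fin 2) (d 0) + Finsupp.single 1 (n - d 0)) f
            • ((X 0 ^ (d 0) * X 1 ^ (n - d 0)) : MvPolynomial (Fin 2) ℂ)) := by
      refine Finset.sum_eq_single_of_mem (d 0)
        (Finset.mem_range.2 (Nat.lt_succ_of_le hd0)) ?_
      intro j _ hj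
      rw [hcoeff, if_neg, mul_zero]
      intro hv
      apply hj
      have := DFunLike.congr_fun hv 0
      simpa [Finsupp.single_apply] using this
    rw [hs, hcoeff, if_pos hdeq, mul_one, hdeq]
  · have h1 : coeff d f = 0 := hf.coeff_eq_zero (by rw [degree_two]; exact hd)
    rw [h1]
    refine (Finset.sum_eq_zero fun i hi => ?_).symm
    rw [Finset.mem_range] at hi
    rw [hcoeff, if_neg, mul_zero]
    intro hv
    apply hd
    have h0 := DFunLike.congr_fun hv 0
    have h1 := DFunLike.congr_fun hv 1
    simp [Finsupp.single_apply] at h0 h1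
    omega

/-- Two linear maps on the degree-`n` homogeneous submodule agreeing on the monomials agree. -/
lemma agree {n : ℕ}
    (φ ψ : (homogeneousSubmodule (Fin 2) ℂ n) →ₗ[ℂ] MvPolynomial (Fin 2) ℂ)
    (h : ∀ i (hi : i ≤ n), φ ⟨_, mono_mem hi⟩ = ψ ⟨_, mono_mem hi⟩)
    (x : homogeneousSubmodule (Fin 2) ℂ n) : φ x = ψ x := by
  obtain ⟨f, hf⟩ := x
  have hrep : (⟨f, hf⟩ : homogeneousSubmodule (Fin 2) ℂ n)
      = ∑ i ∈ (Finset.range (n + 1)).attach,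
        coeff (Finsupp.single 0 i.1 + Finsupp.single 1 (n - i.1)) f
          • (⟨_, mono_mem (Nat.le_of_lt_succ (Finset.mem_range.1 i.2))⟩ :
              homogeneousSubmodule (Fin 2) ℂ n) := by
    apply Subtype.ext
    push_cast [Submodule.coe_sum]
    rw [Finset.sum_attach (Finset.range (n + 1))
      (fun i => coeff (Finsupp.single 0 i + Finsupp.single 1 (n - i)) f
        • (X 0 ^ i * X 1 ^ (n - i) : MvPolynomial (Fin 2) ℂ))]
    exact homog_rep ((mem_homogeneousSubmodule _ _).1 hf)
  rw [hrep, map_sum, map_sum]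
  refine Finset.sum_congr rfl fun i _ => ?_
  rw [LinearMap.map_smul, LinearMap.map_smul, h i.1 (Nat.le_of_lt_succ (Finset.mem_range.1 i.2))]



lemma homog_zero_rep {f : MvPolynomial (Fin 2) ℂ} (hf : f.IsHomogeneous 0) :
    ∃ u : ℂ, f = C u := by
  refine ⟨coeff 0 f, ?_⟩
  have := homog_rep hf
  simpa [smul_eq_C_mul] using this

lemma homog_one_rep {f : MvPolynomial (Fin 2) ℂ} (hf : f.IsHomogeneous 1) :
    f = C (coeff (Finsupp.single 0 1) f) * X 0 + C (coeff (Finsupp.single 1 1) f) * X 1 := by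
  have := homog_rep hf
  rw [Finset.sum_range_succ, Finset.sum_range_one] at this
  simpa [smul_eq_C_mul, add_comm] using this

lemma lin_coeff0 (a b : ℂ) :
    coeff (Finsupp.single 0 1) (C a * X 0 + C b * X 1 : MvPolynomial (Fin 2) ℂ) = a := by
  have h01 : (Finsupp.single (1 : Fin 2) 1) ≠ Finsupp.single (0 : Fin 2) 1 := by
    intro h
    simpa using DFunLike.congr_fun h 0
  simp [coeff_add, coeff_C_mul, coeff_X', h01]

lemma lin_coeff1 (a b : ℂ) :
    coeff (Finsupp.single 1 1) (C a * X 0 + C b * X 1 : MvPolynomial (Fin 2) ℂ) = b := by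
  have h01 : (Finsupp.single (0 : Fin 2) 1) ≠ Finsupp.single (1 : Fin 2) 1 := by
    intro h
    simpa using DFunLike.congr_fun h 1
  simp [coeff_add, coeff_C_mul, coeff_X', h01]

lemma not_unit_of_homog_one {f : MvPolynomial (Fin 2) ℂ} (hf : f.IsHomogeneous 1)
    (h0 : f ≠ 0) : ¬ IsUnit f := by
  intro hu
  obtain ⟨v, hv⟩ := IsUnit.exists_right_inv hu
  have h1 : (f * v).IsHomogeneous 0 := by rw [hv]; exact isHomogeneous_one _ _
  have h2 : f * v ≠ 0 := by rw [hv]; exact one_ne_zero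
  obtain ⟨A, B, hAB, hfA, -⟩ := isHomogeneous_of_mul h1 h2
  have : (1 : ℕ) = A := hf.inj_right hfA h0
  omega

lemma prop_of_pow_eq {a b c d v : ℂ} (hab : ¬(a = 0 ∧ b = 0)) {p : ℕ} (hp : 1 ≤ p)
    (h : (C c * X 0 + C d * X 1 : MvPolynomial (Fin 2) ℂ) ^ p
       = C v * (C a * X 0 + C b * X 1) ^ p) :
    ∃ l : ℂ, l ^ p = v ∧ c = l * a ∧ d = l * b := by
  have he : ∀ x y : ℂ, (c * x + d * y) ^ p = v * (a * x + b * y) ^ p := by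
    intro x y
    have := congrArg (eval ![x, y]) h
    simpa using this
  have hp0 : p ≠ 0 := by omega
  by_cases ha : a = 0
  · have hb : b ≠ 0 := fun hb => hab ⟨ha, hb⟩
    have h1 := he b (-a)
    rw [ha] at h1
    simp [hp0] at h1
    rcases h1 with h1 | h1
    · refine ⟨d / b, ?_, ?_, ?_⟩
      · have h2 := he 0 1
        rw [ha] at h2
        simp at h2
        rw [div_pow, h2]
        field_simp
      · rw [ha, mul_zero, h1]
      · field_simp
    · exact absurd h1 hb
  · have h1 := he b (-a)
    have hz : a * b + b * (-a) = 0 := by ring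
    rw [hz] at h1
    simp [hp0] at h1
    refine ⟨c / a, ?_, ?_, ?_⟩
    · have h2 := he 1 0
      simp at h2
      rw [div_pow, h2]
      field_simp
    · field_simp
    · rw [div_mul_eq_mul_div, eq_div_iff ha, mul_comm d a]
      linear_combination -h1



/-- The core combinatorial argument: from the multiplicative relations between the images
of the monomials, produce coprime linear forms `s`, `t` and the scalars. -/
lemma chain {p q : ℕ} (hp : 1 ≤ p) (hq : 1 ≤ q)
    (a b : ℕ → MvPolynomial (Fin 2) ℂ)
    (ha : ∀ i, i ≤ p → (a i).IsHomogeneous p) (hb : ∀ j, j ≤ q → (b j).IsHomogeneous q)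
    (ha0 : ∀ i, i ≤ p → a i ≠ 0) (hb0 : ∀ j, j ≤ q → b j ≠ 0)
    (hrel : ∀ i j, i < p → j < q → a (i + 1) * b j = a i * b (j + 1))
    (hne : ¬ ∃ u : ℂ, a 1 = C u * a 0) :
    ∃ s t : MvPolynomial (Fin 2) ℂ, ∃ c c' : ℂ, c ≠ 0 ∧ c' ≠ 0 ∧ s ≠ 0 ∧ t ≠ 0 ∧
      s.IsHomogeneous 1 ∧ t.IsHomogeneous 1 ∧ IsRelPrime s t ∧
      (∀ i, i ≤ p → a i = C c * (s ^ i * t ^ (p - i))) ∧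
      (∀ j, j ≤ q → b j = C c' * (s ^ j * t ^ (q - j))) := by
  obtain ⟨s, t, d, hst, hds, hdt⟩ :=
    UniqueFactorizationMonoid.exists_reduced_factors (a 1) (ha0 1 hp) (a 0)
  have hd0 : d ≠ 0 := by
    intro h; exact ha0 1 hp (by rw [← hds, h, zero_mul])
  have hs0 : s ≠ 0 := by
    intro h; exact ha0 1 hp (by rw [← hds, h, mul_zero])
  have ht0 : t ≠ 0 := by
    intro h; exact ha0 0 (by omega) (by rw [← hdt, h, mul_zero])
  have hbrel : ∀ j, j < q → s * b j = t * b (j + 1) := by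
    intro j hj
    have h := hrel 0 j (by omega) hj
    rw [← hds, ← hdt] at h
    have h2 : d * (s * b j) = d * (t * b (j + 1)) := by
      calc d * (s * b j) = d * s * b j := by ring
        _ = d * t * b (j + 1) := h
        _ = d * (t * b (j + 1)) := by ring
    exact mul_left_cancel₀ hd0 h2
  have harel : ∀ i, i < p → s * a i = t * a (i + 1) := by
    intro i hi
    have h := hrel i 0 hi (by omega)
    have hb1 := hbrel 0 (by omega)
    have h2 : (s * a i) * b 0 = (t * a (i + 1)) * b 0 := by
      calc (s * a i) * b 0 = a i * (s * b 0) := by ring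
        _ = a i * (t * b 1) := by rw [hb1]
        _ = t * (a i * b 1) := by ring
        _ = t * (a (i + 1) * b 0) := by rw [← h]
        _ = (t * a (i + 1)) * b 0 := by ring
    exact mul_right_cancel₀ (hb0 0 (by omega)) h2
  have keya : ∀ i, i ≤ p → a i * t ^ i = a 0 * s ^ i := by
    intro i
    induction i with
    | zero => intro _; simp
    | succ i ih =>
        intro hi
        have h1 := ih (by omega)
        have h2 := harel i (by omega)
        calc a (i + 1) * t ^ (i + 1) = (t * a (i + 1)) * t ^ i := by ring
          _ = (s * a i) * t ^ i := by rw [← h2]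
          _ = s * (a i * t ^ i) := by ring
          _ = s * (a 0 * s ^ i) := by rw [h1]
          _ = a 0 * s ^ (i + 1) := by ring
  have keyb : ∀ j, j ≤ q → b j * t ^ j = b 0 * s ^ j := by
    intro j
    induction j with
    | zero => intro _; simp
    | succ j ih =>
        intro hj
        have h1 := ih (by omega)
        have h2 := hbrel j (by omega)
        calc b (j + 1) * t ^ (j + 1) = (t * b (j + 1)) * t ^ j := by ring
          _ = (s * b j) * t ^ j := by rw [← h2]
          _ = s * (b j * t ^ j) := by ring
          _ = s * (b 0 * s ^ j) := by rw [h1]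
          _ = b 0 * s ^ (j + 1) := by ring
  -- homogeneity of the factors
  have h1 : (d * s).IsHomogeneous p := by rw [hds]; exact ha 1 hp
  have h2 : d * s ≠ 0 := by rw [hds]; exact ha0 1 hp
  obtain ⟨A, Bs, hABs, hdhom, hshom⟩ := isHomogeneous_of_mul h1 h2
  have h3 : (d * t).IsHomogeneous p := by rw [hdt]; exact ha 0 (by omega)
  have h4 : d * t ≠ 0 := by rw [hdt]; exact ha0 0 (by omega)
  obtain ⟨A', Bt, hABt, hdhom', hthom⟩ := isHomogeneous_of_mul h3 h4
  have hAA : A = A' := hdhom.inj_right hdhom' hd0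
  -- t^q divides b 0
  have hdvd_t : t ^ q ∣ b 0 := by
    have hdd : t ^ q ∣ b 0 * s ^ q := ⟨b q, by rw [← keyb q le_rfl]; ring⟩
    exact (hst.symm.pow).dvd_of_dvd_mul_right hdd
  have hdvd_s : s ^ p ∣ a p := by
    have hdd : s ^ p ∣ a p * t ^ p := ⟨a 0, by rw [keya p le_rfl]; ring⟩
    exact (hst.pow).dvd_of_dvd_mul_right hdd
  -- degree bounds
  have hBt1 : Bt ≤ 1 := by
    obtain ⟨e1, he1⟩ := hdvd_t
    have hb0h : (t ^ q * e1).IsHomogeneous q := by rw [← he1]; exact hb 0 (by omega)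
    have hb0n : t ^ q * e1 ≠ 0 := by rw [← he1]; exact hb0 0 (by omega)
    obtain ⟨A1, B1, hAB1, htq, -⟩ := isHomogeneous_of_mul hb0h hb0n
    have : A1 = Bt * q := (htq.inj_right (hthom.pow q) (pow_ne_zero _ ht0))
    nlinarith
  have hBs1 : Bs ≤ 1 := by
    obtain ⟨e1, he1⟩ := hdvd_s
    have hah : (s ^ p * e1).IsHomogeneous p := by rw [← he1]; exact ha p le_rfl
    have han : s ^ p * e1 ≠ 0 := by rw [← he1]; exact ha0 p le_rfl
    obtain ⟨A1, B1, hAB1, hsp, -⟩ := isHomogeneous_of_mul hah han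
    have : A1 = Bs * p := (hsp.inj_right (hshom.pow p) (pow_ne_zero _ hs0))
    nlinarith
  have hBst : Bs = Bt := by omega
  rcases Nat.lt_or_ge Bt 1 with hB0 | hB1
  · -- both constants: contradiction with hne
    exfalso
    have hBt0 : Bt = 0 := by omega
    have hBs0 : Bs = 0 := by omega
    obtain ⟨us, hus⟩ := homog_zero_rep (hBs0 ▸ hshom)
    obtain ⟨ut, hut⟩ := homog_zero_rep (hBt0 ▸ hthom)
    have hus0 : us ≠ 0 := by rintro rfl; simp at hus; exact hs0 hus
    have hut0 : ut ≠ 0 := by rintro rfl; simp at hut; exact ht0 hut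
    apply hne
    refine ⟨us * ut⁻¹, ?_⟩
    have h5 := harel 0 (by omega)
    rw [hus, hut] at h5
    have hCut : (C ut : MvPolynomial (Fin 2) ℂ) ≠ 0 := by
      simpa using hut0
    apply mul_left_cancel₀ hCut
    have hCe : (C us : MvPolynomial (Fin 2) ℂ) = C ut * C (us * ut⁻¹) := by
      rw [← C_mul]
      congr 1
      field_simp
    calc C ut * a 1 = C us * a 0 := h5.symm
      _ = C ut * (C (us * ut⁻¹) * a 0) := by rw [hCe]; ring
  · -- s, t are linear forms
    have hBt : Bt = 1 := by omega
    have hBs : Bs = 1 := by omega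
    rw [hBs] at hshom
    rw [hBt] at hthom
    -- t^p divides a 0
    have hdvd_tp : t ^ p ∣ a 0 := by
      have hdd : t ^ p ∣ a 0 * s ^ p := ⟨a p, by rw [← keya p le_rfl]; ring⟩
      exact (hst.symm.pow).dvd_of_dvd_mul_right hdd
    obtain ⟨e0, he0⟩ := hdvd_tp
    have he0hom : e0.IsHomogeneous 0 := by
      have hh : (t ^ p * e0).IsHomogeneous p := by rw [← he0]; exact ha 0 (by omega)
      have hn : t ^ p * e0 ≠ 0 := by rw [← he0]; exact ha0 0 (by omega)
      obtain ⟨A1, B1, hAB1, htp, he⟩ := isHomogeneous_of_mul hh hn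
      have hA1 : A1 = 1 * p := (htp.inj_right (hthom.pow p) (pow_ne_zero _ ht0))
      have : B1 = 0 := by omega
      rwa [this] at he
    obtain ⟨c, hc⟩ := homog_zero_rep he0hom
    have hc0 : c ≠ 0 := by
      rintro rfl
      simp at hc
      exact ha0 0 (by omega) (by rw [he0, hc, mul_zero])
    obtain ⟨e1, he1⟩ := hdvd_t
    have he1hom : e1.IsHomogeneous 0 := by
      have hh : (t ^ q * e1).IsHomogeneous q := by rw [← he1]; exact hb 0 (by omega)
      have hn : t ^ q * e1 ≠ 0 := by rw [← he1]; exact hb0 0 (by omega)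
      obtain ⟨A1, B1, hAB1, htq, he⟩ := isHomogeneous_of_mul hh hn
      have hA1 : A1 = 1 * q := (htq.inj_right (hthom.pow q) (pow_ne_zero _ ht0))
      have : B1 = 0 := by omega
      rwa [this] at he
    obtain ⟨c', hc'⟩ := homog_zero_rep he1hom
    have hc'0 : c' ≠ 0 := by
      rintro rfl
      simp at hc'
      exact hb0 0 (by omega) (by rw [he1, hc', mul_zero])
    refine ⟨s, t, c, c', hc0, hc'0, hs0, ht0, hshom, hthom, hst, ?_, ?_⟩
    · intro i hi
      have hk := keya i hi
      have htpe : (t : MvPolynomial (Fin 2) ℂ) ^ p = t ^ (p - i) * t ^ i := by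
        rw [← pow_add]
        congr 1
        omega
      have : a i * t ^ i = (C c * (s ^ i * t ^ (p - i))) * t ^ i := by
        rw [hk, he0, hc, htpe]
        ring
      exact mul_right_cancel₀ (pow_ne_zero _ ht0) this
    · intro j hj
      have hk := keyb j hj
      have htpe : (t : MvPolynomial (Fin 2) ℂ) ^ q = t ^ (q - j) * t ^ j := by
        rw [← pow_add]
        congr 1
        omega
      have : b j * t ^ j = (C c' * (s ^ j * t ^ (q - j))) * t ^ j := by
        rw [hk, he1, hc', htpe]
        ring
      exact mul_right_cancel₀ (pow_ne_zero _ ht0) this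


end SymPowAux
namespace SymPowAux

lemma mono_ne (i j : ℕ) : (X 0 ^ i * X 1 ^ j : MvPolynomial (Fin 2) ℂ) ≠ 0 :=
  mul_ne_zero (pow_ne_zero _ (X_ne_zero _)) (pow_ne_zero _ (X_ne_zero _))

lemma mono_mul (p q i j : ℕ) (hi : i ≤ p) (hj : j ≤ q) :
    (X 0 ^ i * X 1 ^ (p - i) : MvPolynomial (Fin 2) ℂ) * (X 0 ^ j * X 1 ^ (q - j))
      = X 0 ^ (i + j) * X 1 ^ (p + q - (i + j)) := by
  have h : p - i + (q - j) = p + q - (i + j) := by omega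
  rw [← h, pow_add, pow_add]
  ring

lemma substX (g : Matrix (Fin 2) (Fin 2) ℂ) (i : Fin 2) :
    substMap g (X i) = C (g i 0) * X 0 + C (g i 1) * X 1 := by
  rw [substMap, aeval_X, Fin.sum_univ_two]

end SymPowAux
open SymPowAux in
/-- If automorphisms `α` of `SᵖU`, `β` of `SᵠU`, `γ` of `S^{p+q}U` satisfy
`μ ∘ (α ⊗ β) = γ ∘ μ` for the multiplication map `μ : SᵖU ⊗ SᵠU → S^{p+q}U`, then there
is `g ∈ GL(U)`, unique up to a nonzero scalar, with `Sᵖg ∈ ℂ*·α`, `Sᵠg ∈ ℂ*·β`,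
`S^{p+q}g ∈ ℂ*·γ`. -/
theorem exists_gl2_inducing_up_to_scalar (p q : ℕ) (hp : 1 ≤ p) (hq : 1 ≤ q)
    (α : (homogeneousSubmodule (Fin 2) ℂ p) ≃ₗ[ℂ] (homogeneousSubmodule (Fin 2) ℂ p))
    (β : (homogeneousSubmodule (Fin 2) ℂ q) ≃ₗ[ℂ] (homogeneousSubmodule (Fin 2) ℂ q))
    (γ : (homogeneousSubmodule (Fin 2) ℂ (p + q)) ≃ₗ[ℂ]
      (homogeneousSubmodule (Fin 2) ℂ (p + q)))
    (hμ : ∀ (x : homogeneousSubmodule (Fin 2) ℂ p) (y : homogeneousSubmodule (Fin 2) ℂ q),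
      ((γ ⟨(x : MvPolynomial (Fin 2) ℂ) * (y : MvPolynomial (Fin 2) ℂ),
          homogeneousSubmodule_mul p q (Submodule.mul_mem_mul x.2 y.2)⟩ :
        homogeneousSubmodule (Fin 2) ℂ (p + q)) : MvPolynomial (Fin 2) ℂ) =
        (α x : MvPolynomial (Fin 2) ℂ) * (β y : MvPolynomial (Fin 2) ℂ)) :
    ∃ g : GL (Fin 2) ℂ,
      (InducesUpToScalar (g : Matrix (Fin 2) (Fin 2) ℂ) p α ∧
        InducesUpToScalar (g : Matrix (Fin 2) (Fin 2) ℂ) q β ∧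
        InducesUpToScalar (g : Matrix (Fin 2) (Fin 2) ℂ) (p + q) γ) ∧
      ∀ g' : GL (Fin 2) ℂ,
        (InducesUpToScalar (g' : Matrix (Fin 2) (Fin 2) ℂ) p α ∧
          InducesUpToScalar (g' : Matrix (Fin 2) (Fin 2) ℂ) q β ∧
          InducesUpToScalar (g' : Matrix (Fin 2) (Fin 2) ℂ) (p + q) γ) →
        ∃ c : ℂˣ, (g' : Matrix (Fin 2) (Fin 2) ℂ) = (c : ℂ) • (g : Matrix (Fin 2) (Fin 2) ℂ) := by
  classical
  -- the key multiplicative identity between images of monomials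
  have hAB : ∀ (k i j : ℕ) (hi : i ≤ p) (hj : j ≤ q) (hk : i + j = k),
      ((γ ⟨X 0 ^ k * X 1 ^ (p + q - k), mono_mem (by omega)⟩ :
          homogeneousSubmodule (Fin 2) ℂ (p + q)) : MvPolynomial (Fin 2) ℂ)
        = ((α ⟨X 0 ^ i * X 1 ^ (p - i), mono_mem hi⟩ :
              homogeneousSubmodule (Fin 2) ℂ p) : MvPolynomial (Fin 2) ℂ)
          * ((β ⟨X 0 ^ j * X 1 ^ (q - j), mono_mem hj⟩ :
              homogeneousSubmodule (Fin 2) ℂ q) : MvPolynomial (Fin 2) ℂ) := by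
    intro k i j hi hj hk
    subst hk
    have h := hμ ⟨_, mono_mem hi⟩ ⟨_, mono_mem hj⟩
    have harg : (⟨(X 0 ^ i * X 1 ^ (p - i) : MvPolynomial (Fin 2) ℂ)
          * (X 0 ^ j * X 1 ^ (q - j)),
        homogeneousSubmodule_mul p q (Submodule.mul_mem_mul (mono_mem hi) (mono_mem hj))⟩ :
          homogeneousSubmodule (Fin 2) ℂ (p + q))
        = ⟨X 0 ^ (i + j) * X 1 ^ (p + q - (i + j)), mono_mem (by omega)⟩ := by
      apply Subtype.ext
      exact mono_mul p q i j hi hj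
    rw [harg] at h
    exact h
  -- nonvanishing of the images of monomials
  have hane : ∀ (i : ℕ) (hi : i ≤ p),
      ((α ⟨X 0 ^ i * X 1 ^ (p - i), mono_mem hi⟩ :
        homogeneousSubmodule (Fin 2) ℂ p) : MvPolynomial (Fin 2) ℂ) ≠ 0 := by
    intro i hi h
    have h1 : α ⟨X 0 ^ i * X 1 ^ (p - i), mono_mem hi⟩ = 0 := by
      exact Subtype.ext h
    rw [LinearEquiv.map_eq_zero_iff] at h1
    have := congrArg (Subtype.val) h1
    exact mono_ne i (p - i) this
  have hbne : ∀ (j : ℕ) (hj : j ≤ q),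
      ((β ⟨X 0 ^ j * X 1 ^ (q - j), mono_mem hj⟩ :
        homogeneousSubmodule (Fin 2) ℂ q) : MvPolynomial (Fin 2) ℂ) ≠ 0 := by
    intro j hj h
    have h1 : β ⟨X 0 ^ j * X 1 ^ (q - j), mono_mem hj⟩ = 0 := Subtype.ext h
    rw [LinearEquiv.map_eq_zero_iff] at h1
    have := congrArg (Subtype.val) h1
    exact mono_ne j (q - j) this
  -- apply the chain lemma
  obtain ⟨s, t, c, c', hc0, hc'0, hs0, ht0, hshom, hthom, hst, formA, formB⟩ :=
    chain hp hq
      (fun i => if h : i ≤ p then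
        ((α ⟨X 0 ^ i * X 1 ^ (p - i), mono_mem h⟩ :
          homogeneousSubmodule (Fin 2) ℂ p) : MvPolynomial (Fin 2) ℂ) else 0)
      (fun j => if h : j ≤ q then
        ((β ⟨X 0 ^ j * X 1 ^ (q - j), mono_mem h⟩ :
          homogeneousSubmodule (Fin 2) ℂ q) : MvPolynomial (Fin 2) ℂ) else 0)
      (by intro i hi; rw [dif_pos hi]; exact (α _).2)
      (by intro j hj; rw [dif_pos hj]; exact (β _).2)
      (by intro i hi; rw [dif_pos hi]; exact hane i hi)
      (by intro j hj; rw [dif_pos hj]; exact hbne j hj)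
      (by
        intro i j hi hj
        rw [dif_pos (by omega : i + 1 ≤ p), dif_pos (by omega : j ≤ q),
          dif_pos (by omega : i ≤ p), dif_pos (by omega : j + 1 ≤ q)]
        rw [← hAB (i + j + 1) (i + 1) j (by omega) (by omega) (by omega),
          ← hAB (i + j + 1) i (j + 1) (by omega) (by omega) (by omega)])
      (by
        rintro ⟨u, hu⟩
        rw [dif_pos hp, dif_pos (by omega : (0:ℕ) ≤ p)] at hu
        have h1 : α ⟨X 0 ^ 1 * X 1 ^ (p - 1), mono_mem hp⟩
            = α (u • ⟨X 0 ^ 0 * X 1 ^ (p - 0), mono_mem (by omega)⟩) := by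
          apply Subtype.ext
          rw [LinearEquiv.map_smul]
          push_cast
          rw [hu, smul_eq_C_mul]
        have h2 := α.injective h1
        have h3 : (X 0 ^ 1 * X 1 ^ (p - 1) : MvPolynomial (Fin 2) ℂ)
            = C u * (X 0 ^ 0 * X 1 ^ (p - 0)) := by
          have h3' := congrArg Subtype.val h2
          simpa [smul_eq_C_mul] using h3'
        have h4 := congrArg (coeff (Finsupp.single 0 1 + Finsupp.single 1 (p - 1))) h3
        rw [mono_eq, mono_eq] at h4
        rw [coeff_monomial, if_pos rfl, coeff_C_mul, coeff_monomial, if_neg, mul_zero] at h4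
        · exact one_ne_zero h4
        · intro hh
          have := DFunLike.congr_fun hh 0
          simp [Finsupp.single_apply] at this)
  -- coefficients of the linear forms s and t
  have hsrep := homog_one_rep hshom
  have htrep := homog_one_rep hthom
  set s0 := coeff (Finsupp.single 0 1) s with hs0def
  set s1 := coeff (Finsupp.single 1 1) s with hs1def
  set t0 := coeff (Finsupp.single 0 1) t with ht0def
  set t1 := coeff (Finsupp.single 1 1) t with ht1def
  have hsne : ¬(s0 = 0 ∧ s1 = 0) := by
    rintro ⟨h0, h1⟩
    apply hs0
    rw [hsrep, h0, h1]
    simp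
  have htne : ¬(t0 = 0 ∧ t1 = 0) := by
    rintro ⟨h0, h1⟩
    apply ht0
    rw [htrep, h0, h1]
    simp
  -- the matrix
  have hdet : (!![s0, s1; t0, t1] : Matrix (Fin 2) (Fin 2) ℂ).det ≠ 0 := by
    rw [Matrix.det_fin_two_of]
    intro hd
    have hsu : ¬ IsUnit s := not_unit_of_homog_one hshom hs0
    apply hsu
    have hdvd : s ∣ t := by
      by_cases hs00 : s0 = 0
      · have hs10 : s1 ≠ 0 := fun h => hsne ⟨hs00, h⟩
        have ht00 : t0 = 0 := by
          rw [hs00] at hd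
          have : s1 * t0 = 0 := by linear_combination -hd
          rcases mul_eq_zero.1 this with h | h
          · exact absurd h hs10
          · exact h
        refine ⟨C (t1 * s1⁻¹), ?_⟩
        have h1 : t1 = t1 * s1⁻¹ * s1 := by field_simp
        rw [htrep, hsrep, hs00, ht00]
        simp only [map_zero, zero_mul, zero_add]
        rw [mul_comm (C s1 * X 1) (C (t1 * s1⁻¹)), ← mul_assoc, ← C_mul, ← h1]
      · refine ⟨C (t0 * s0⁻¹), ?_⟩
        have h0 : t0 = t0 * s0⁻¹ * s0 := by field_simp
        have h1 : t1 = t0 * s0⁻¹ * s1 := by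
          field_simp
          linear_combination hd
        rw [htrep, hsrep, mul_comm (C s0 * X 0 + C s1 * X 1) (C (t0 * s0⁻¹)), mul_add,
          ← mul_assoc, ← C_mul, ← mul_assoc, ← C_mul, ← h0, ← h1]
    exact hst dvd_rfl hdvd
  -- `substMap` of the matrix on the generators
  have hsub00 : substMap !![s0, s1; t0, t1] (X 0) = s := by
    rw [substX, show (!![s0, s1; t0, t1] : Matrix (Fin 2) (Fin 2) ℂ) 0 0 = s0 from rfl,
      show (!![s0, s1; t0, t1] : Matrix (Fin 2) (Fin 2) ℂ) 0 1 = s1 from rfl]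
    exact hsrep.symm
  have hsub01 : substMap !![s0, s1; t0, t1] (X 1) = t := by
    rw [substX, show (!![s0, s1; t0, t1] : Matrix (Fin 2) (Fin 2) ℂ) 1 0 = t0 from rfl,
      show (!![s0, s1; t0, t1] : Matrix (Fin 2) (Fin 2) ℂ) 1 1 = t1 from rfl]
    exact htrep.symm
  have hmono : ∀ (n i : ℕ), substMap !![s0, s1; t0, t1] (X 0 ^ i * X 1 ^ (n - i))
      = s ^ i * t ^ (n - i) := by
    intro n i
    rw [_root_.map_mul, map_pow, map_pow, hsub00, hsub01]
  have hdet' : s0 * t1 - s1 * t0 ≠ 0 := by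
    rw [Matrix.det_fin_two_of] at hdet
    exact hdet
  -- the induced maps agree with α, β, γ up to the scalars c, c', c * c'
  have indP : ∀ x : homogeneousSubmodule (Fin 2) ℂ p,
      substMap !![s0, s1; t0, t1] (x : MvPolynomial (Fin 2) ℂ)
        = (c⁻¹ : ℂ) • ((α x : homogeneousSubmodule (Fin 2) ℂ p) : MvPolynomial (Fin 2) ℂ) := by
    have key : ∀ (i : ℕ) (hi : i ≤ p),
        ((substMap !![s0, s1; t0, t1]).toLinearMap.comp
          (Submodule.subtype (homogeneousSubmodule (Fin 2) ℂ p)))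
            ⟨X 0 ^ i * X 1 ^ (p - i), mono_mem hi⟩
        = ((c⁻¹ : ℂ) • ((Submodule.subtype (homogeneousSubmodule (Fin 2) ℂ p)).comp
            α.toLinearMap)) ⟨X 0 ^ i * X 1 ^ (p - i), mono_mem hi⟩ := by
      intro i hi
      have fA := formA i hi
      rw [dif_pos hi] at fA
      simp only [LinearMap.comp_apply, LinearMap.smul_apply, Submodule.subtype_apply,
        AlgHom.toLinearMap_apply, LinearEquiv.coe_toLinearMap]
      rw [hmono p i, fA, smul_eq_C_mul, ← mul_assoc, ← C_mul, inv_mul_cancel₀ hc0, C_1,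
        one_mul]
    intro x
    have h := agree _ _ key x
    simpa only [LinearMap.comp_apply, LinearMap.smul_apply, Submodule.subtype_apply,
      AlgHom.toLinearMap_apply, LinearEquiv.coe_toLinearMap] using h
  have indQ : ∀ x : homogeneousSubmodule (Fin 2) ℂ q,
      substMap !![s0, s1; t0, t1] (x : MvPolynomial (Fin 2) ℂ)
        = (c'⁻¹ : ℂ) • ((β x : homogeneousSubmodule (Fin 2) ℂ q) : MvPolynomial (Fin 2) ℂ) := by
    have key : ∀ (j : ℕ) (hj : j ≤ q),
        ((substMap !![s0, s1; t0, t1]).toLinearMap.comp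
          (Submodule.subtype (homogeneousSubmodule (Fin 2) ℂ q)))
            ⟨X 0 ^ j * X 1 ^ (q - j), mono_mem hj⟩
        = ((c'⁻¹ : ℂ) • ((Submodule.subtype (homogeneousSubmodule (Fin 2) ℂ q)).comp
            β.toLinearMap)) ⟨X 0 ^ j * X 1 ^ (q - j), mono_mem hj⟩ := by
      intro j hj
      have fB := formB j hj
      rw [dif_pos hj] at fB
      simp only [LinearMap.comp_apply, LinearMap.smul_apply, Submodule.subtype_apply,
        AlgHom.toLinearMap_apply, LinearEquiv.coe_toLinearMap]
      rw [hmono q j, fB, smul_eq_C_mul, ← mul_assoc, ← C_mul, inv_mul_cancel₀ hc'0, C_1,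
        one_mul]
    intro x
    have h := agree _ _ key x
    simpa only [LinearMap.comp_apply, LinearMap.smul_apply, Submodule.subtype_apply,
      AlgHom.toLinearMap_apply, LinearEquiv.coe_toLinearMap] using h
  have formC : ∀ (k : ℕ) (hk : k ≤ p + q),
      ((γ ⟨X 0 ^ k * X 1 ^ (p + q - k), mono_mem hk⟩ :
          homogeneousSubmodule (Fin 2) ℂ (p + q)) : MvPolynomial (Fin 2) ℂ)
        = C (c * c') * (s ^ k * t ^ (p + q - k)) := by
    intro k hk
    have hi : min p k ≤ p := min_le_left _ _
    have hj : k - min p k ≤ q := by omega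
    have hk2 : min p k + (k - min p k) = k := by omega
    rw [hAB k (min p k) (k - min p k) hi hj hk2]
    have fA := formA (min p k) hi
    rw [dif_pos hi] at fA
    have fB := formB (k - min p k) hj
    rw [dif_pos hj] at fB
    have e2 : (p - min p k) + (q - (k - min p k)) = p + q - k := by omega
    have halg : C c * (s ^ (min p k) * t ^ (p - min p k))
        * (C c' * (s ^ (k - min p k) * t ^ (q - (k - min p k))))
        = C (c * c') * (s ^ (min p k + (k - min p k))
            * t ^ ((p - min p k) + (q - (k - min p k)))) := by
      rw [C_mul, pow_add, pow_add]
      ring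
    rw [fA, fB, halg, hk2, e2]
  have indPQ : ∀ x : homogeneousSubmodule (Fin 2) ℂ (p + q),
      substMap !![s0, s1; t0, t1] (x : MvPolynomial (Fin 2) ℂ)
        = ((c * c')⁻¹ : ℂ)
          • ((γ x : homogeneousSubmodule (Fin 2) ℂ (p + q)) : MvPolynomial (Fin 2) ℂ) := by
    have key : ∀ (k : ℕ) (hk : k ≤ p + q),
        ((substMap !![s0, s1; t0, t1]).toLinearMap.comp
          (Submodule.subtype (homogeneousSubmodule (Fin 2) ℂ (p + q))))
            ⟨X 0 ^ k * X 1 ^ (p + q - k), mono_mem hk⟩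
        = (((c * c')⁻¹ : ℂ) • ((Submodule.subtype (homogeneousSubmodule (Fin 2) ℂ (p + q))).comp
            γ.toLinearMap)) ⟨X 0 ^ k * X 1 ^ (p + q - k), mono_mem hk⟩ := by
      intro k hk
      simp only [LinearMap.comp_apply, LinearMap.smul_apply, Submodule.subtype_apply,
        AlgHom.toLinearMap_apply, LinearEquiv.coe_toLinearMap]
      rw [hmono (p + q) k, formC k hk, smul_eq_C_mul, ← mul_assoc, ← C_mul,
        inv_mul_cancel₀ (mul_ne_zero hc0 hc'0), C_1, one_mul]
    intro x
    have h := agree _ _ key x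
    simpa only [LinearMap.comp_apply, LinearMap.smul_apply, Submodule.subtype_apply,
      AlgHom.toLinearMap_apply, LinearEquiv.coe_toLinearMap] using h
  -- assemble the GL element
  have hGcoe : ((Matrix.GeneralLinearGroup.mkOfDetNeZero !![s0, s1; t0, t1] hdet :
      GL (Fin 2) ℂ) : Matrix (Fin 2) (Fin 2) ℂ) = !![s0, s1; t0, t1] := rfl
  refine ⟨Matrix.GeneralLinearGroup.mkOfDetNeZero !![s0, s1; t0, t1] hdet,
    ⟨⟨Units.mk0 c⁻¹ (inv_ne_zero hc0), fun x => ?_⟩,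
     ⟨Units.mk0 c'⁻¹ (inv_ne_zero hc'0), fun x => ?_⟩,
     ⟨Units.mk0 (c * c')⁻¹ (inv_ne_zero (mul_ne_zero hc0 hc'0)), fun x => ?_⟩⟩, ?_⟩
  · rw [hGcoe]
    exact indP x
  · rw [hGcoe]
    exact indQ x
  · rw [hGcoe]
    exact indPQ x
  -- uniqueness
  rintro g' ⟨⟨u', hu'⟩, -, -⟩
  have hα : ∀ x : homogeneousSubmodule (Fin 2) ℂ p,
      ((α x : homogeneousSubmodule (Fin 2) ℂ p) : MvPolynomial (Fin 2) ℂ)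
        = c • substMap !![s0, s1; t0, t1] (x : MvPolynomial (Fin 2) ℂ) := by
    intro x
    rw [indP x, smul_smul, mul_inv_cancel₀ hc0, one_smul]
  have hv0 : (u' : ℂ) * c ≠ 0 := mul_ne_zero (Units.ne_zero u') hc0
  have hrel' : ∀ x : homogeneousSubmodule (Fin 2) ℂ p,
      substMap (g' : Matrix (Fin 2) (Fin 2) ℂ) (x : MvPolynomial (Fin 2) ℂ)
        = C ((u' : ℂ) * c) * substMap !![s0, s1; t0, t1] (x : MvPolynomial (Fin 2) ℂ) := by
    intro x
    rw [hu' x, hα x, smul_smul, smul_eq_C_mul]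
  -- first row
  have E0 : (C ((g' : Matrix (Fin 2) (Fin 2) ℂ) 0 0) * X 0
        + C ((g' : Matrix (Fin 2) (Fin 2) ℂ) 0 1) * X 1 : MvPolynomial (Fin 2) ℂ) ^ p
      = C ((u' : ℂ) * c) * (C s0 * X 0 + C s1 * X 1) ^ p := by
    have h := hrel' ⟨X 0 ^ p * X 1 ^ (p - p), mono_mem le_rfl⟩
    rw [show ((⟨X 0 ^ p * X 1 ^ (p - p), mono_mem le_rfl⟩ :
        homogeneousSubmodule (Fin 2) ℂ p) : MvPolynomial (Fin 2) ℂ)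
      = X 0 ^ p * X 1 ^ (p - p) from rfl] at h
    rw [Nat.sub_self, pow_zero, mul_one, map_pow, map_pow, substX, hsub00, hsrep] at h
    exact h
  obtain ⟨l0, hl0p, h00, h01⟩ := prop_of_pow_eq hsne hp E0
  -- second row
  have E1 : (C ((g' : Matrix (Fin 2) (Fin 2) ℂ) 1 0) * X 0
        + C ((g' : Matrix (Fin 2) (Fin 2) ℂ) 1 1) * X 1 : MvPolynomial (Fin 2) ℂ) ^ p
      = C ((u' : ℂ) * c) * (C t0 * X 0 + C t1 * X 1) ^ p := by
    have h := hrel' ⟨X 0 ^ 0 * X 1 ^ (p - 0), mono_mem (Nat.zero_le p)⟩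
    rw [show ((⟨X 0 ^ 0 * X 1 ^ (p - 0), mono_mem (Nat.zero_le p)⟩ :
        homogeneousSubmodule (Fin 2) ℂ p) : MvPolynomial (Fin 2) ℂ)
      = X 0 ^ 0 * X 1 ^ (p - 0) from rfl] at h
    rw [Nat.sub_zero, pow_zero, one_mul, map_pow, map_pow, substX, hsub01, htrep] at h
    exact h
  obtain ⟨l1, hl1p, h10, h11⟩ := prop_of_pow_eq htne hp E1
  -- sum of the rows
  have hsumne : ¬(s0 + t0 = 0 ∧ s1 + t1 = 0) := by
    rintro ⟨e0, e1⟩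
    apply hdet'
    linear_combination s0 * e1 - s1 * e0
  have hxsum : ((X 0 + X 1 : MvPolynomial (Fin 2) ℂ) ^ p) ∈
      homogeneousSubmodule (Fin 2) ℂ p := by
    rw [mem_homogeneousSubmodule]
    simpa using ((isHomogeneous_X ℂ (0 : Fin 2)).add (isHomogeneous_X ℂ (1 : Fin 2))).pow p
  have E2 : (C ((g' : Matrix (Fin 2) (Fin 2) ℂ) 0 0 + (g' : Matrix (Fin 2) (Fin 2) ℂ) 1 0) * X 0
        + C ((g' : Matrix (Fin 2) (Fin 2) ℂ) 0 1 + (g' : Matrix (Fin 2) (Fin 2) ℂ) 1 1) * X 1 :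
          MvPolynomial (Fin 2) ℂ) ^ p
      = C ((u' : ℂ) * c) * (C (s0 + t0) * X 0 + C (s1 + t1) * X 1) ^ p := by
    have h := hrel' ⟨(X 0 + X 1) ^ p, hxsum⟩
    rw [show ((⟨(X 0 + X 1) ^ p, hxsum⟩ :
        homogeneousSubmodule (Fin 2) ℂ p) : MvPolynomial (Fin 2) ℂ)
      = (X 0 + X 1) ^ p from rfl] at h
    rw [map_pow, map_pow, _root_.map_add, _root_.map_add, substX, substX, hsub00, hsub01] at h
    have hc1 : (C ((g' : Matrix (Fin 2) (Fin 2) ℂ) 0 0) * X 0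
          + C ((g' : Matrix (Fin 2) (Fin 2) ℂ) 0 1) * X 1)
        + (C ((g' : Matrix (Fin 2) (Fin 2) ℂ) 1 0) * X 0
          + C ((g' : Matrix (Fin 2) (Fin 2) ℂ) 1 1) * X 1)
        = (C ((g' : Matrix (Fin 2) (Fin 2) ℂ) 0 0 + (g' : Matrix (Fin 2) (Fin 2) ℂ) 1 0) * X 0
          + C ((g' : Matrix (Fin 2) (Fin 2) ℂ) 0 1 + (g' : Matrix (Fin 2) (Fin 2) ℂ) 1 1) * X 1 :
            MvPolynomial (Fin 2) ℂ) := by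
      rw [C_add, C_add]
      ring
    have hc2 : s + t = (C (s0 + t0) * X 0 + C (s1 + t1) * X 1 : MvPolynomial (Fin 2) ℂ) := by
      rw [C_add, C_add, hsrep, htrep]
      ring
    rw [hc1, hc2] at h
    exact h
  obtain ⟨l2, hl2p, h20, h21⟩ := prop_of_pow_eq hsumne hp E2
  -- all three scalars agree
  have q0 : (l0 - l2) * s0 + (l1 - l2) * t0 = 0 := by linear_combination h20 - h00 - h10
  have q1 : (l0 - l2) * s1 + (l1 - l2) * t1 = 0 := by linear_combination h21 - h01 - h11
  have hl02 : l0 = l2 := by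
    by_contra hne'
    have hz : (l0 - l2) * (s0 * t1 - s1 * t0) = 0 := by linear_combination t1 * q0 - t0 * q1
    rcases mul_eq_zero.1 hz with h | h
    · exact hne' (by linear_combination h)
    · exact hdet' h
  have hl12 : l1 = l0 := by
    by_contra hne'
    have hz0 : (l1 - l2) * t0 = 0 := by linear_combination q0 - s0 * hl02
    have hz1 : (l1 - l2) * t1 = 0 := by linear_combination q1 - s1 * hl02
    have hl12' : l1 - l2 ≠ 0 := by
      intro h
      apply hne'
      rw [hl02]
      linear_combination h
    exact htne ⟨by
        rcases mul_eq_zero.1 hz0 with h | h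
        · exact absurd h hl12'
        · exact h,
      by
        rcases mul_eq_zero.1 hz1 with h | h
        · exact absurd h hl12'
        · exact h⟩
  have hl00 : l0 ≠ 0 := by
    intro hzz
    apply hv0
    rw [← hl0p, hzz, zero_pow (by omega : p ≠ 0)]
  refine ⟨Units.mk0 l0 hl00, ?_⟩
  rw [hl12] at h10 h11
  ext i j
  rw [hGcoe]
  fin_cases i <;> fin_cases j <;>
    simp only [Units.val_mk0, Matrix.smul_apply, smul_eq_mul]
  · exact h00
  · exact h01
  · exact h10
  · exact h11
end

section
/- Let $E$, $F$ be finite dimensional complex vector spaces, $\phi\colon F \to F^*$ a symplectic (nondegenerate antisymmetric) form, and let $S$ be the isometry group of $(F,\phi)$. Then the map $\kappa\colon \mathrm{Hom}(E,F) \to \mathrm{Hom}_{AS}(E, E^*)$, $f \mapsto f^* \circ \phi \circ f$, is $S$-invariant, takes values in antisymmetric homomorphisms, and its image is exactly the set of antisymmetric homomorphisms $E \to E^*$ of rank at most $\min\{\dim E, \dim F\}$. -/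
universe u v

theorem symplectic_pullback_key (n : ℕ) : ∀ (E : Type u) (F : Type v)
    [AddCommGroup E] [Module ℂ E] [AddCommGroup F] [Module ℂ F]
    [FiniteDimensional ℂ E] [FiniteDimensional ℂ F]
    (ψ : E →ₗ[ℂ] Module.Dual ℂ E) (φ : F →ₗ[ℂ] Module.Dual ℂ F),
    Module.finrank ℂ E = n →
    (∀ x y, ψ x y = - ψ y x) →
    (∀ x y, φ x y = - φ y x) → Function.Bijective φ →
    Module.finrank ℂ (LinearMap.range ψ) ≤ Module.finrank ℂ F →
    ∃ f : E →ₗ[ℂ] F, ∀ x y, φ (f x) (f y) = ψ x y := by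
  induction n using Nat.strong_induction_on with
  | _ n IH =>
  intro E F _ _ _ _ _ _ ψ φ hE hψa hφa hφb hrank
  by_cases hψ0 : ψ = 0
  · exact ⟨0, by simp [hψ0]⟩
  · have altψ : ∀ z, ψ z z = 0 := fun z => by linear_combination (1/2 : ℂ) * hψa z z
    have altφ : ∀ z, φ z z = 0 := fun z => by linear_combination (1/2 : ℂ) * hφa z z
    obtain ⟨x, hx⟩ : ∃ x, ψ x ≠ 0 := by
      by_contra h; push_neg at h; exact hψ0 (LinearMap.ext h)
    obtain ⟨y0, hy0⟩ : ∃ y0, ψ x y0 ≠ 0 := by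
      by_contra h; push_neg at h; exact hx (LinearMap.ext h)
    set y : E := (ψ x y0)⁻¹ • y0 with hy
    have hxy : ψ x y = 1 := by
      simp only [hy, map_smul, smul_eq_mul]; exact inv_mul_cancel₀ hy0
    have hyx : ψ y x = -1 := by rw [hψa, hxy]
    -- the E-side complement
    set W : Submodule ℂ E := LinearMap.ker (ψ x) ⊓ LinearMap.ker (ψ y) with hW
    set π0 : E →ₗ[ℂ] E := LinearMap.id - (ψ x).smulRight y + (ψ y).smulRight x with hπ0
    have hπ0' : ∀ z, π0 z = z - ψ x z • y + ψ y z • x := fun z => by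
      simp [hπ0]
    have hπ0mem : ∀ z, π0 z ∈ W := by
      intro z
      refine Submodule.mem_inf.2 ⟨?_, ?_⟩
      · simp only [LinearMap.mem_ker, hπ0', map_add, map_sub, map_smul, smul_eq_mul,
          hxy, altψ x]
        ring
      · simp only [LinearMap.mem_ker, hπ0', map_add, map_sub, map_smul, smul_eq_mul,
          hyx, altψ y]
        ring
    set π : E →ₗ[ℂ] W := LinearMap.codRestrict W π0 hπ0mem with hπdef
    set ψ' : W →ₗ[ℂ] Module.Dual ℂ W := W.subtype.dualMap ∘ₗ ψ ∘ₗ W.subtype with hψ'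
    have hψ'app : ∀ u v : W, ψ' u v = ψ u v := fun u v => rfl
    -- the F side
    have hrankpos : 0 < Module.finrank ℂ (LinearMap.range ψ) := by
      have : Nontrivial (LinearMap.range ψ) :=
        nontrivial_of_ne ⟨ψ x, LinearMap.mem_range_self ψ x⟩ 0
          (by simp only [ne_eq, Submodule.mk_eq_zero]; exact hx)
      exact Module.finrank_pos_iff.mpr this
    have hFpos : 0 < Module.finrank ℂ F := lt_of_lt_of_le hrankpos hrank
    have : Nontrivial F := Module.nontrivial_of_finrank_pos hFpos
    obtain ⟨a, ha⟩ := exists_ne (0 : F)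
    have hφa0 : φ a ≠ 0 := fun h => ha (hφb.1 (by rw [h, map_zero]))
    obtain ⟨b0, hb0⟩ : ∃ b0, φ a b0 ≠ 0 := by
      by_contra h; push_neg at h; exact hφa0 (LinearMap.ext h)
    set b : F := (φ a b0)⁻¹ • b0 with hb
    have hab : φ a b = 1 := by
      simp only [hb, map_smul, smul_eq_mul]; exact inv_mul_cancel₀ hb0
    have hba : φ b a = -1 := by rw [hφa, hab]
    set W' : Submodule ℂ F := LinearMap.ker (φ a) ⊓ LinearMap.ker (φ b) with hW'
    set φ' : W' →ₗ[ℂ] Module.Dual ℂ W' := W'.subtype.dualMap ∘ₗ φ ∘ₗ W'.subtype with hφ'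
    have hφ'app : ∀ u v : W', φ' u v = φ u v := fun u v => rfl
    -- elements of W' pair to zero with a and b
    have hW'a : ∀ w : W', φ a w = 0 := fun w => w.2.1
    have hW'b : ∀ w : W', φ b w = 0 := fun w => w.2.2
    have hW'a' : ∀ w : W', φ (w : F) a = 0 := fun w => by rw [hφa, hW'a w]; ring
    have hW'b' : ∀ w : W', φ (w : F) b = 0 := fun w => by rw [hφa, hW'b w]; ring
    -- injectivity of φ'
    have hφ'inj : Function.Injective φ' := by
      intro w1 w2 h12
      have key : ∀ w : W', φ' w = 0 → (w : F) = 0 := by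
        intro w hw
        have hφw : φ (w : F) = 0 := by
          ext v
          have hvmem : v - φ a v • b + φ b v • a ∈ W' := by
            refine Submodule.mem_inf.2 ⟨?_, ?_⟩
            · simp only [LinearMap.mem_ker, map_add, map_sub, map_smul, smul_eq_mul,
                hab, altφ a]
              ring
            · simp only [LinearMap.mem_ker, map_add, map_sub, map_smul, smul_eq_mul,
                hba, altφ b]
              ring
          have h1 : φ (w : F) (v - φ a v • b + φ b v • a) = 0 := by
            have := congrArg (fun t => t (⟨_, hvmem⟩ : W')) hw
            simpa [hφ'app] using this
          have h2 : φ (w : F) b = 0 := hW'b' w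
          have h3 : φ (w : F) a = 0 := hW'a' w
          simp only [map_add, map_sub, map_smul, smul_eq_mul, h2, h3] at h1
          simpa using h1
        exact hφb.1 (show φ (w : F) = φ 0 by rw [hφw, map_zero])
      have h1 : ((w1 - w2 : W') : F) = 0 := key _ (by simp [map_sub, h12])
      exact sub_eq_zero.mp (Subtype.ext h1)
    -- bijectivity of φ'
    have hφ'bij : Function.Bijective φ' := by
      have hfr : Module.finrank ℂ W' = Module.finrank ℂ (Module.Dual ℂ W') :=
        Subspace.dual_finrank_eq.symm
      exact ⟨hφ'inj, (LinearMap.injective_iff_surjective_of_finrank_eq_finrank hfr).1 hφ'inj⟩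
    have hψ'a : ∀ u v : W, ψ' u v = -ψ' v u := fun u v => hψa u v
    have hφ'a2 : ∀ u v : W', φ' u v = -φ' v u := fun u v => hφa u v
    -- dimension counting on the E side
    have hWlt : W < LinearMap.ker (ψ x) := by
      refine lt_of_le_of_ne inf_le_left (fun h => ?_)
      have hxW : x ∈ W := h ▸ (LinearMap.mem_ker.2 (altψ x))
      have : ψ y x = 0 := LinearMap.mem_ker.1 (Submodule.mem_inf.1 hxW).2
      rw [this] at hyx
      norm_num at hyx
    have hkerlt : LinearMap.ker (ψ x) < ⊤ := by
      refine lt_of_le_of_ne le_top (fun h => ?_)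
      have : y ∈ LinearMap.ker (ψ x) := h ▸ Submodule.mem_top
      rw [LinearMap.mem_ker] at this
      rw [this] at hxy
      exact one_ne_zero hxy.symm
    have dimW2 : Module.finrank ℂ W + 2 ≤ Module.finrank ℂ E := by
      have d1 := Submodule.finrank_lt_finrank_of_lt hWlt
      have d2 := Submodule.finrank_lt (K := ℂ) (V := E) hkerlt.ne
      omega
    -- kernel inclusion
    have hkerW : ∀ z : E, z ∈ LinearMap.ker ψ → z ∈ W := by
      intro z hz
      rw [LinearMap.mem_ker] at hz
      refine Submodule.mem_inf.2 ⟨?_, ?_⟩ <;> rw [LinearMap.mem_ker, hψa, hz] <;> simp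
    have hkerle : Module.finrank ℂ (LinearMap.ker ψ) ≤ Module.finrank ℂ (LinearMap.ker ψ') := by
      set ι1 : LinearMap.ker ψ →ₗ[ℂ] W :=
        LinearMap.codRestrict W (LinearMap.ker ψ).subtype (fun z => hkerW z z.2) with hι1
      have hmem : ∀ z : LinearMap.ker ψ, ι1 z ∈ LinearMap.ker ψ' := by
        intro z
        rw [LinearMap.mem_ker]
        ext v
        have hz : ψ (z : E) = 0 := z.2
        show ψ ((ι1 z : W) : E) (v : E) = 0
        have : ((ι1 z : W) : E) = (z : E) := rfl
        rw [this, hz]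
        rfl
      set ι : LinearMap.ker ψ →ₗ[ℂ] LinearMap.ker ψ' :=
        LinearMap.codRestrict (LinearMap.ker ψ') ι1 hmem with hι
      have hinj : Function.Injective ι := by
        intro z1 z2 h
        have : ((z1 : E)) = ((z2 : E)) := congrArg (fun t => (((t : LinearMap.ker ψ') : W) : E)) h
        exact Subtype.ext this
      exact LinearMap.finrank_le_finrank_of_injective hinj
    -- dimension counting on the F side
    have e1 := Submodule.finrank_sup_add_finrank_inf_eq (LinearMap.ker (φ a)) (LinearMap.ker (φ b))
    rw [← hW'] at e1
    have e2 : Module.finrank ℂ (LinearMap.ker (φ a) ⊔ LinearMap.ker (φ b) : Submodule ℂ F) ≤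
        Module.finrank ℂ F := Submodule.finrank_le _
    have e3 := LinearMap.finrank_range_add_finrank_ker (φ a)
    have e4 := LinearMap.finrank_range_add_finrank_ker (φ b)
    have e5 : Module.finrank ℂ (LinearMap.range (φ a)) ≤ 1 := by
      simpa using Submodule.finrank_le (LinearMap.range (φ a))
    have e6 : Module.finrank ℂ (LinearMap.range (φ b)) ≤ 1 := by
      simpa using Submodule.finrank_le (LinearMap.range (φ b))
    -- rank-nullity
    have hrn1 := LinearMap.finrank_range_add_finrank_ker ψ
    have hrn2 := LinearMap.finrank_range_add_finrank_ker ψ'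
    have hrank' : Module.finrank ℂ (LinearMap.range ψ') ≤ Module.finrank ℂ W' := by omega
    have hdimWlt : Module.finrank ℂ W < n := by omega
    obtain ⟨g, hg⟩ := IH (Module.finrank ℂ W) hdimWlt W W' ψ' φ' rfl hψ'a hφ'a2 hφ'bij hrank'
    -- the pullback map
    set f : E →ₗ[ℂ] F :=
      (ψ x).smulRight b - (ψ y).smulRight a + W'.subtype ∘ₗ g ∘ₗ π with hf
    refine ⟨f, ?_⟩
    intro u v
    have hfz : ∀ z, f z = ψ x z • b - ψ y z • a + ((g (π z) : W') : F) := fun z => by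
      simp [hf]
    have hgu := hg (π u) (π v)
    rw [hφ'app, hψ'app] at hgu
    have h1 : φ (f u) (f v) = ψ x u * ψ y v - ψ y u * ψ x v +
        φ ((g (π u) : W') : F) ((g (π v) : W') : F) := by
      rw [hfz, hfz]
      simp only [map_add, map_sub, map_smul, LinearMap.add_apply, LinearMap.sub_apply,
        LinearMap.smul_apply, smul_eq_mul, altφ, hab, hba, hW'a (g (π v)), hW'b (g (π v)),
        hW'a' (g (π u)), hW'b' (g (π u))]
      ring
    have hcoe : ∀ z, ((π z : W) : E) = z - ψ x z • y + ψ y z • x := fun z => hπ0' z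
    have h2 : ψ ((π u : W) : E) ((π v : W) : E) =
        ψ u v + ψ x v * ψ y u - ψ y v * ψ x u := by
      rw [hcoe, hcoe]
      simp only [map_add, map_sub, map_smul, LinearMap.add_apply, LinearMap.sub_apply,
        LinearMap.smul_apply, smul_eq_mul, hxy, hyx, altψ]
      rw [hψa u y, hψa u x]
      ring
    rw [h1, hgu, h2]
    ring


/-- The map `κ : Hom(E, F) → Hom(E, E^*)`, `f ↦ f^* ∘ φ ∘ f`. -/
noncomputable def kappaMap {E F : Type*} [AddCommGroup E] [Module ℂ E]
    [AddCommGroup F] [Module ℂ F]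
    (φ : F →ₗ[ℂ] Module.Dual ℂ F) (f : E →ₗ[ℂ] F) : E →ₗ[ℂ] Module.Dual ℂ E :=
  f.dualMap ∘ₗ φ ∘ₗ f

/-- first fundamental theorem of invariant theory for symplectic groups:
For finite dimensional complex vector spaces `E`, `F` and a symplectic form
`φ : F → F^*`, the map `κ : f ↦ f^* ∘ φ ∘ f` is invariant under the isometry group of
`(F, φ)`, takes values in antisymmetric homomorphisms `E → E^*`, and its image is
exactly the set of antisymmetric homomorphisms of rank at most `min(dim E, dim F)`. -/
theorem symplectic_fft (E F : Type*) [AddCommGroup E] [Module ℂ E]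
    [AddCommGroup F] [Module ℂ F] [FiniteDimensional ℂ E] [FiniteDimensional ℂ F]
    (φ : F →ₗ[ℂ] Module.Dual ℂ F)
    (hanti : ∀ x y : F, φ x y = - φ y x)
    (hnondeg : Function.Bijective φ) :
    (∀ s : F ≃ₗ[ℂ] F, (∀ x y : F, φ (s x) (s y) = φ x y) →
      ∀ f : E →ₗ[ℂ] F, kappaMap φ ((s : F →ₗ[ℂ] F) ∘ₗ f) = kappaMap φ f) ∧
    (∀ (f : E →ₗ[ℂ] F) (x y : E), kappaMap φ f x y = - kappaMap φ f y x) ∧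
    (∀ ψ : E →ₗ[ℂ] Module.Dual ℂ E, (∀ x y : E, ψ x y = - ψ y x) →
      ((∃ f : E →ₗ[ℂ] F, kappaMap φ f = ψ) ↔
        Module.finrank ℂ (LinearMap.range ψ) ≤
          min (Module.finrank ℂ E) (Module.finrank ℂ F))) := by
  have happ : ∀ (f : E →ₗ[ℂ] F) (x y : E), kappaMap φ f x y = φ (f x) (f y) :=
    fun f x y => rfl
  refine ⟨?_, ?_, ?_⟩
  · intro s hs f
    apply LinearMap.ext; intro x; apply LinearMap.ext; intro y
    simp only [happ, LinearMap.comp_apply, LinearMap.coe_coe]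
    exact hs _ _
  · intro f x y
    rw [happ, happ]
    exact hanti _ _
  · intro ψ hψ
    constructor
    · rintro ⟨f, rfl⟩
      refine le_min ?_ ?_
      · exact (LinearMap.finrank_range_le _)
      · have h1 : kappaMap φ f = (f.dualMap ∘ₗ φ) ∘ₗ f := rfl
        rw [h1, LinearMap.range_comp]
        calc Module.finrank ℂ (Submodule.map (f.dualMap ∘ₗ φ) (LinearMap.range f))
            ≤ Module.finrank ℂ (LinearMap.range f) := Submodule.finrank_map_le _ _
          _ ≤ Module.finrank ℂ F := Submodule.finrank_le _
    · intro hr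
      obtain ⟨f, hf⟩ := symplectic_pullback_key (Module.finrank ℂ E) E F ψ φ rfl hψ hanti
        hnondeg (le_trans hr (min_le_right _ _))
      refine ⟨f, ?_⟩
      apply LinearMap.ext; intro u; apply LinearMap.ext; intro v
      rw [happ]
      exact hf u v
end

section
/- Let $k \ge 2$, let $a$ be a $k \times (n+k)$ complex matrix all of whose $k\times k$ minors are nonzero, and set $D_i = \mathrm{diag}(0,\dots,0,1,0,\dots,0,1,\dots,1)$, the $(n+k)\times(n+k)$ diagonal matrix with $1$ in position $i$ and in positions $n+2,\dots,n+k$, for $i=1,\dots,n+1$. Then the only tuple $(b_1,\dots,b_{n+1})$ of vectors in $\mathbb{C}^{n+k}$ satisfying $a D_i b_i = 0$ for all $i$ and $a(D_{i_1} b_{i_2} + D_{i_2} b_{i_1}) = 0$ for all $1 \le i_1 < i_2 \le n+1$ is the zero tuple. -/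
open Matrix

lemma thooft_aux (n k : ℕ) (a : Matrix (Fin k) (Fin (n + k)) ℂ)
    (ha : ∀ c : Fin k → Fin (n + k), Function.Injective c → (a.submatrix id c).det ≠ 0)
    (v : Fin (n + k) → ℂ) (c : Fin k → Fin (n + k)) (hc : Function.Injective c)
    (hsupp : ∀ j, v j ≠ 0 → ∃ t, c t = j)
    (hv : a.mulVec v = 0) : v = 0 := by
  have key : (a.submatrix id c).mulVec (v ∘ c) = 0 := by
    funext x
    have e1 : (a.submatrix id c).mulVec (v ∘ c) x = ∑ t, a x (c t) * v (c t) := by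
      simp [Matrix.mulVec, dotProduct, Matrix.submatrix]
    have e2 : ∑ t, a x (c t) * v (c t) = ∑ j ∈ Finset.image c Finset.univ, a x j * v j :=
      (Finset.sum_image (f := fun j => a x j * v j) (fun t _ s _ h => hc h)).symm
    have e3 : ∑ j ∈ Finset.image c Finset.univ, a x j * v j = ∑ j, a x j * v j := by
      refine Finset.sum_subset (Finset.subset_univ _) (fun j _ hj => ?_)
      have : v j = 0 := by
        by_contra h
        obtain ⟨t, rfl⟩ := hsupp j h
        exact hj (Finset.mem_image_of_mem c (Finset.mem_univ t))
      simp [this]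
    have e4 : ∑ j, a x j * v j = a.mulVec v x := rfl
    rw [e1, e2, e3, e4, hv]
  have hunit : IsUnit (a.submatrix id c).det := isUnit_iff_ne_zero.mpr (ha c hc)
  have h0 : v ∘ c = 0 := by
    have := congrArg ((a.submatrix id c)⁻¹.mulVec ·) key
    simpa [Matrix.mulVec_mulVec, Matrix.nonsing_inv_mul _ hunit] using this
  funext j
  by_cases h : v j = 0
  · exact h
  · obtain ⟨t, rfl⟩ := hsupp j h
    exact congrFun h0 t

/-- Let `k ≥ 2` and let `a` be a `k × (n+k)` complex matrix all of whose
`k × k` minors are nonzero. With `Dᵢ` the diagonal matrix having `1` in position `i` and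
in positions `n+1, …, n+k-1` (0-indexed) and `0` elsewhere, the only tuple
`(b₀, …, bₙ)` of vectors of `ℂ^{n+k}` satisfying `a Dᵢ bᵢ = 0` for all `i` and
`a (D_{i₁} b_{i₂} + D_{i₂} b_{i₁}) = 0` for all `i₁ < i₂` is the zero tuple. -/
theorem thooft_diagonal_system_trivial_solution (n k : ℕ) (hk : 2 ≤ k)
    (a : Matrix (Fin k) (Fin (n + k)) ℂ)
    (ha : ∀ c : Fin k → Fin (n + k), Function.Injective c → (a.submatrix id c).det ≠ 0)
    (D : Fin (n + 1) → Matrix (Fin (n + k)) (Fin (n + k)) ℂ)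
    (hD : ∀ i, D i = Matrix.diagonal fun j : Fin (n + k) =>
      if (j : ℕ) = (i : ℕ) ∨ n + 1 ≤ (j : ℕ) then (1 : ℂ) else 0)
    (b : Fin (n + 1) → Fin (n + k) → ℂ)
    (h1 : ∀ i, a.mulVec ((D i).mulVec (b i)) = 0)
    (h2 : ∀ i₁ i₂ : Fin (n + 1), i₁ < i₂ →
      a.mulVec ((D i₁).mulVec (b i₂) + (D i₂).mulVec (b i₁)) = 0) :
    b = 0 := by
  set d : Fin (n + 1) → Fin (n + k) → ℂ := fun i j =>
    if (j : ℕ) = (i : ℕ) ∨ n + 1 ≤ (j : ℕ) then (1 : ℂ) else 0 with hd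
  have hDv : ∀ i (w : Fin (n + k) → ℂ) (j : Fin (n + k)),
      (D i).mulVec w j = d i j * w j := by
    intro i w j
    rw [hD i, Matrix.mulVec_diagonal]
  -- Step 1: b i j = 0 when j = i or j ≥ n+1
  have step1 : ∀ (i : Fin (n + 1)) (j : Fin (n + k)),
      ((j : ℕ) = (i : ℕ) ∨ n + 1 ≤ (j : ℕ)) → b i j = 0 := by
    intro i j hj
    -- choose injection covering {i} ∪ tail
    set c : Fin k → Fin (n + k) := fun t =>
      if (t : ℕ) = 0 then ⟨(i : ℕ), by omega⟩ else ⟨n + (t : ℕ), by omega⟩ with hc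
    have hcinj : Function.Injective c := by
      intro s t hst
      rcases Nat.eq_zero_or_pos (s : ℕ) with hs | hs <;>
        rcases Nat.eq_zero_or_pos (t : ℕ) with ht | ht
      · exact Fin.ext (hs.trans ht.symm)
      · exfalso
        simp only [hc, hs, ht.ne', if_true, if_false, if_pos rfl] at hst
        have := congrArg Fin.val hst
        simp at this; omega
      · exfalso
        simp only [hc, ht, hs.ne', if_true, if_false, if_pos rfl] at hst
        have := congrArg Fin.val hst
        simp at this; omega
      · simp only [hc, hs.ne', ht.ne', if_false] at hst
        have := congrArg Fin.val hst
        simp at this; exact Fin.ext this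
    have hz : (D i).mulVec (b i) = 0 := by
      refine thooft_aux n k a ha _ c hcinj ?_ (h1 i)
      intro j' hj'
      have hd' : d i j' ≠ 0 := by
        intro h0
        rw [hDv] at hj'
        exact hj' (by rw [h0, zero_mul])
      have : (j' : ℕ) = (i : ℕ) ∨ n + 1 ≤ (j' : ℕ) := by
        by_contra h
        exact hd' (by simp [hd, h]; omega)
      rcases this with h | h
      · exact ⟨⟨0, by omega⟩, Fin.ext (by simp [hc, h.symm])⟩
      · refine ⟨⟨(j' : ℕ) - n, by omega⟩, Fin.ext ?_⟩
        have h2 : (j' : ℕ) - n ≠ 0 := by omega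
        simp [hc, h2]
        omega
    have := congrFun hz j
    rw [hDv] at this
    have hdj : d i j = 1 := by simp [hd, hj]; intro; omega
    rw [hdj, one_mul] at this
    exact this
  -- Step 2: b i₂ i₁ = 0 and b i₁ i₂ = 0 for i₁ < i₂
  have step2 : ∀ (i₁ i₂ : Fin (n + 1)), i₁ < i₂ →
      b i₂ ⟨(i₁ : ℕ), by omega⟩ = 0 ∧ b i₁ ⟨(i₂ : ℕ), by omega⟩ = 0 := by
    intro i₁ i₂ hlt
    set c : Fin k → Fin (n + k) := fun t =>
      if (t : ℕ) = 0 then ⟨(i₁ : ℕ), by omega⟩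
      else if (t : ℕ) = 1 then ⟨(i₂ : ℕ), by omega⟩
      else ⟨n + (t : ℕ) - 1, by omega⟩ with hc
    have hi12 : (i₁ : ℕ) < (i₂ : ℕ) := hlt
    have hi1 : (i₁ : ℕ) ≤ n := by omega
    have hi2 : (i₂ : ℕ) ≤ n := by omega
    have hcval : ∀ t : Fin k, ((c t : ℕ) = (i₁ : ℕ) ∧ (t : ℕ) = 0) ∨
        ((c t : ℕ) = (i₂ : ℕ) ∧ (t : ℕ) = 1) ∨
        ((c t : ℕ) = n + (t : ℕ) - 1 ∧ 2 ≤ (t : ℕ)) := by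
      intro t
      by_cases h0 : (t : ℕ) = 0
      · left; exact ⟨by simp [hc, h0], h0⟩
      · by_cases h1 : (t : ℕ) = 1
        · right; left; exact ⟨by simp [hc, h1], h1⟩
        · right; right; exact ⟨by simp [hc, h0, h1], by omega⟩
    have hcinj : Function.Injective c := by
      intro s t hst
      have hs := hcval s; have ht := hcval t
      have hv := congrArg Fin.val hst
      refine Fin.ext ?_
      rcases hs with ⟨e1, e2⟩ | ⟨e1, e2⟩ | ⟨e1, e2⟩ <;>
        rcases ht with ⟨f1, f2⟩ | ⟨f1, f2⟩ | ⟨f1, f2⟩ <;> omega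
    set v : Fin (n + k) → ℂ := (D i₁).mulVec (b i₂) + (D i₂).mulVec (b i₁) with hv
    have hvj : ∀ j, v j = d i₁ j * b i₂ j + d i₂ j * b i₁ j := by
      intro j; simp [hv, hDv]
    have hz : v = 0 := by
      refine thooft_aux n k a ha _ c hcinj ?_ (h2 i₁ i₂ hlt)
      intro j hj
      by_cases htail : n + 1 ≤ (j : ℕ)
      · exfalso
        have b2 : b i₂ j = 0 := step1 i₂ j (Or.inr htail)
        have b1 : b i₁ j = 0 := step1 i₁ j (Or.inr htail)
        exact hj (by rw [hvj, b1, b2]; ring)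
      · have : (j : ℕ) = (i₁ : ℕ) ∨ (j : ℕ) = (i₂ : ℕ) := by
          by_contra h
          push_neg at h
          have d1 : d i₁ j = 0 := by simp [hd]; omega
          have d2 : d i₂ j = 0 := by simp [hd]; omega
          exact hj (by rw [hvj, d1, d2]; ring)
        rcases this with h | h
        · exact ⟨⟨0, by omega⟩, Fin.ext (by simp [hc, h.symm])⟩
        · refine ⟨⟨1, by omega⟩, Fin.ext ?_⟩
          simp [hc, h.symm]
    constructor
    · have := congrFun hz ⟨(i₁ : ℕ), by omega⟩
      rw [hvj] at this
      have d1 : d i₁ ⟨(i₁ : ℕ), by omega⟩ = 1 := by simp [hd]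
      have d2 : d i₂ ⟨(i₁ : ℕ), by omega⟩ = 0 := by simp [hd]; omega
      rw [d1, d2, one_mul, zero_mul, add_zero] at this
      exact this
    · have := congrFun hz ⟨(i₂ : ℕ), by omega⟩
      rw [hvj] at this
      have d1 : d i₁ ⟨(i₂ : ℕ), by omega⟩ = 0 := by simp [hd]; omega
      have d2 : d i₂ ⟨(i₂ : ℕ), by omega⟩ = 1 := by simp [hd]
      rw [d1, d2, one_mul, zero_mul, zero_add] at this
      exact this
  -- conclude
  funext i j
  simp only [Pi.zero_apply]
  by_cases htail : n + 1 ≤ (j : ℕ)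
  · exact step1 i j (Or.inr htail)
  · have hjn : (j : ℕ) ≤ n := by omega
    set j' : Fin (n + 1) := ⟨(j : ℕ), by omega⟩ with hj'
    rcases lt_trichotomy j' i with h | h | h
    · have := (step2 j' i h).1
      have : b i ⟨(j' : ℕ), by omega⟩ = 0 := this
      simpa using this
    · exact step1 i j (Or.inl (by rw [← h]))
    · have := (step2 i j' h).2
      have : b i ⟨(j' : ℕ), by omega⟩ = 0 := this
      simpa using this
end
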